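/- arXiv:0711.0694 — 5 statements merged into one kernel-verified Lean document; each statement's English description precedes it below -/
import Mathlib

section
/- Stopping condition for Exact λ Policy Iteration: run λ Policy Iteration with no error (ε_k = 0 for all k). If at some iteration k₀ the value v_{k₀} satisfies spn_∞(T v_{k₀} − v_{k₀}) < ((1−γ)/γ)·ε, then the greedy policy π_{k₀+1} with respect to v_{k₀} is ε-optimal: ‖v_* − v^{π_{k₀+1}}‖_∞ < ε. -/
open Matrix Filter Finset

section MDPDefs

variable {X : Type*} {A : Type*} [Fintype X] [Nonempty X] [DecidableEq X]
  [Fintype A] [Nonempty A]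

/-- Transition matrix of a policy: `P^π i j = p i (π i) j`. -/
noncomputable def Pmat (p : X → A → X → ℝ) (π : X → A) : Matrix X X ℝ :=
  Matrix.of fun i j => p i (π i) j

/-- Expected reward vector of a policy. -/
noncomputable def rvec (p : X → A → X → ℝ) (r : X → A → X → ℝ) (π : X → A) : X → ℝ :=
  fun i => ∑ j, p i (π i) j * r i (π i) j

/-- The Bellman operator of a policy: `T^π v = r^π + γ P^π v`. -/
noncomputable def Tpol (p : X → A → X → ℝ) (r : X → A → X → ℝ) (γ : ℝ)
    (π : X → A) (v : X → ℝ) : X → ℝ :=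
  rvec p r π + γ • (Pmat p π).mulVec v

/-- The optimal Bellman operator: `(T v) i = max_a Σ_j p i a j (r i a j + γ v j)`. -/
noncomputable def Topt (p : X → A → X → ℝ) (r : X → A → X → ℝ) (γ : ℝ)
    (v : X → ℝ) : X → ℝ :=
  fun i => Finset.univ.sup' Finset.univ_nonempty
    (fun a => ∑ j, p i a j * (r i a j + γ * v j))

/-- A policy is greedy with respect to `v` when `T^π v = T v`. -/
def Greedy (p : X → A → X → ℝ) (r : X → A → X → ℝ) (γ : ℝ)
    (π : X → A) (v : X → ℝ) : Prop :=
  Tpol p r γ π v = Topt p r γ v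

/-- The value of a policy: `v^π = (I - γ P^π)⁻¹ r^π`. -/
noncomputable def vpi (p : X → A → X → ℝ) (r : X → A → X → ℝ) (γ : ℝ)
    (π : X → A) : X → ℝ :=
  ((1 : Matrix X X ℝ) - γ • Pmat p π)⁻¹.mulVec (rvec p r π)

/-- The λ policy iteration update operator
`T_λ^π v = (I - λγ P^π)⁻¹ (r^π + (1-λ)γ P^π v)`. -/
noncomputable def Tlam (p : X → A → X → ℝ) (r : X → A → X → ℝ) (γ lam : ℝ)
    (π : X → A) (v : X → ℝ) : X → ℝ :=
  ((1 : Matrix X X ℝ) - (lam * γ) • Pmat p π)⁻¹.mulVec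
    (rvec p r π + ((1 - lam) * γ) • (Pmat p π).mulVec v)

/-- A stochastic matrix: nonnegative entries, all row sums equal to one. -/
def IsStochastic (M : Matrix X X ℝ) : Prop :=
  (∀ i j, 0 ≤ M i j) ∧ ∀ i, ∑ j, M i j = 1

/-- A probability distribution on `X`. -/
def IsDistribution (μ : X → ℝ) : Prop :=
  (∀ x, 0 ≤ μ x) ∧ ∑ x, μ x = 1

/-- Weighted L_p norm `‖u‖_{p,μ} = (Σ_x μ x |u x|^p)^(1/p)`. -/
noncomputable def wLpNorm (pp : ℝ) (μ : X → ℝ) (u : X → ℝ) : ℝ :=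
  (∑ x, μ x * |u x| ^ pp) ^ (1 / pp)

/-- Max norm `‖u‖_∞ = max_x |u x|`. -/
noncomputable def linfNorm (u : X → ℝ) : ℝ :=
  Finset.univ.sup' Finset.univ_nonempty fun x => |u x|

/-- Span seminorm `spn_∞ u = max_x u x - min_x u x`. -/
noncomputable def spanInf (u : X → ℝ) : ℝ :=
  (Finset.univ.sup' Finset.univ_nonempty u) - (Finset.univ.inf' Finset.univ_nonempty u)

/-- Span seminorm `spn_{p,μ} u = 2 min_a ‖u - a e‖_{p,μ}`. -/
noncomputable def spanLp (pp : ℝ) (μ : X → ℝ) (u : X → ℝ) : ℝ :=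
  2 * ⨅ a : ℝ, wLpNorm pp μ (fun x => u x - a)

/-- Componentwise limsup of a sequence of vectors. -/
noncomputable def limsupVec (f : ℕ → X → ℝ) : X → ℝ :=
  fun x => Filter.atTop.limsup fun k => f k x

/-- The product `M k * M (k-1) * ⋯ * M (j+1)` (identity when `k ≤ j`). -/
noncomputable def descProd (M : ℕ → Matrix X X ℝ) (j k : ℕ) : Matrix X X ℝ :=
  ((List.range (k - j)).map fun t => M (k - t)).prod

/-- The mixture distribution `½ μ (M + M')` (as a row vector pushed through matrices). -/
noncomputable def mixDist (μ : X → ℝ) (M M' : Matrix X X ℝ) : X → ℝ :=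
  Matrix.vecMul μ (((1 : ℝ) / 2) • (M + M'))

/-- Concentration coefficient `C(ν) = max_{i,a,j} p i a j / ν j`. -/
noncomputable def concCoef (p : X → A → X → ℝ) (ν : X → ℝ) : ℝ :=
  Finset.univ.sup' Finset.univ_nonempty
    (fun x : X × A × X => p x.1 x.2.1 x.2.2 / ν x.2.2)

/-- `β = (1-λ)γ/(1-λγ)`. -/
noncomputable def betaF (γ lam : ℝ) : ℝ := (1 - lam) * γ / (1 - lam * γ)

/-- `A_k = (1-λγ)(I - λγ P_k)⁻¹ P_k`. -/
noncomputable def Amat (p : X → A → X → ℝ) (γ lam : ℝ) (π : X → A) : Matrix X X ℝ :=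
  (1 - lam * γ) • (((1 : Matrix X X ℝ) - (lam * γ) • Pmat p π)⁻¹ * Pmat p π)

/-- `B_{jk}` (also `E'_{k k₀}` with `k₀ = j`). -/
noncomputable def Bmat (p : X → A → X → ℝ) (γ lam : ℝ) (π : ℕ → X → A) (πs : X → A)
    (j k : ℕ) : Matrix X X ℝ :=
  ((1 - γ) / γ ^ (k - j)) • (
    (lam * γ / (1 - lam * γ)) •
      (∑ i ∈ Finset.Ico j k, (γ ^ (k - 1 - i) * betaF γ lam ^ (i - j)) •
        ((Pmat p πs) ^ (k - 1 - i) * descProd (fun l => Amat p γ lam (π l)) j (i + 1)))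
    + (betaF γ lam ^ (k - j)) •
      (((1 : Matrix X X ℝ) - γ • Pmat p (π k))⁻¹ *
        descProd (fun l => Amat p γ lam (π l)) j k))

/-- `B'_{jk} = γ B_{jk} P_j + (1-γ)(P_*)^{k-j}`. -/
noncomputable def Bmat' (p : X → A → X → ℝ) (γ lam : ℝ) (π : ℕ → X → A) (πs : X → A)
    (j k : ℕ) : Matrix X X ℝ :=
  γ • (Bmat p γ lam π πs j k * Pmat p (π j)) + (1 - γ) • (Pmat p πs) ^ (k - j)

/-- `E_{k k₀} = (1-γ)(P_*)^{k-k₀}(I-γP_*)⁻¹`. -/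
noncomputable def Emat (p : X → A → X → ℝ) (γ : ℝ) (πs : X → A) (k0 k : ℕ) :
    Matrix X X ℝ :=
  (1 - γ) • ((Pmat p πs) ^ (k - k0) * ((1 : Matrix X X ℝ) - γ • Pmat p πs)⁻¹)

/-- `F_{k k₀} = (1-γ)(P_*)^{k-k₀} + γ E'_{k k₀} P_*`. -/
noncomputable def Fmat (p : X → A → X → ℝ) (γ lam : ℝ) (π : ℕ → X → A) (πs : X → A)
    (k0 k : ℕ) : Matrix X X ℝ :=
  (1 - γ) • (Pmat p πs) ^ (k - k0) + γ • (Bmat p γ lam π πs k0 k * Pmat p πs)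

/-- `(1-γ)²(I-γP_{πs})⁻¹ (P_{πa} (I-γP_{πb})⁻¹)`; this gives `C_k` and `C'_k`. -/
noncomputable def Cmat (p : X → A → X → ℝ) (γ : ℝ) (πs πa πb : X → A) :
    Matrix X X ℝ :=
  (1 - γ) ^ 2 • (((1 : Matrix X X ℝ) - γ • Pmat p πs)⁻¹ *
    (Pmat p πa * ((1 : Matrix X X ℝ) - γ • Pmat p πb)⁻¹))

/-- `D = (1-γ) P (I-γP)⁻¹`. -/
noncomputable def Dmat (p : X → A → X → ℝ) (γ : ℝ) (π : X → A) : Matrix X X ℝ :=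
  (1 - γ) • (Pmat p π * ((1 : Matrix X X ℝ) - γ • Pmat p π)⁻¹)

end MDPDefs

section Aux

variable {X A : Type*} [Fintype X] [Nonempty X] [DecidableEq X] [Fintype A] [Nonempty A]

lemma stoch_mulVec_le_sup' {P : Matrix X X ℝ} (hP : IsStochastic P) (u : X → ℝ) (i : X) :
    P.mulVec u i ≤ Finset.univ.sup' Finset.univ_nonempty u := by
  have h : P.mulVec u i = ∑ j, P i j * u j := rfl
  rw [h]
  calc ∑ j, P i j * u j ≤ ∑ j, P i j * Finset.univ.sup' Finset.univ_nonempty u := by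
        refine Finset.sum_le_sum fun j _ => ?_
        exact mul_le_mul_of_nonneg_left (Finset.le_sup' u (Finset.mem_univ j)) (hP.1 i j)
    _ = Finset.univ.sup' Finset.univ_nonempty u := by
        rw [← Finset.sum_mul, hP.2 i, one_mul]

lemma stoch_inf'_le_mulVec {P : Matrix X X ℝ} (hP : IsStochastic P) (u : X → ℝ) (i : X) :
    Finset.univ.inf' Finset.univ_nonempty u ≤ P.mulVec u i := by
  have h : P.mulVec u i = ∑ j, P i j * u j := rfl
  rw [h]
  calc Finset.univ.inf' Finset.univ_nonempty u
      = ∑ j, P i j * Finset.univ.inf' Finset.univ_nonempty u := by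
        rw [← Finset.sum_mul, hP.2 i, one_mul]
    _ ≤ ∑ j, P i j * u j := by
        refine Finset.sum_le_sum fun j _ => ?_
        exact mul_le_mul_of_nonneg_left (Finset.inf'_le u (Finset.mem_univ j)) (hP.1 i j)

lemma Pmat_stoch (p : X → A → X → ℝ) (hp0 : ∀ i a j, 0 ≤ p i a j)
    (hp1 : ∀ i a, ∑ j, p i a j = 1) (π : X → A) : IsStochastic (Pmat p π) :=
  ⟨fun i j => hp0 i (π i) j, fun i => hp1 i (π i)⟩

lemma stoch_det_unit {P : Matrix X X ℝ} (hP : IsStochastic P) {γ : ℝ}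
    (hγ0 : 0 ≤ γ) (hγ1 : γ < 1) : IsUnit ((1 : Matrix X X ℝ) - γ • P).det := by
  rw [← Matrix.isUnit_iff_isUnit_det, ← Matrix.mulVec_injective_iff_isUnit]
  set M := (1 : Matrix X X ℝ) - γ • P with hM
  have hlin : ∀ u, M.mulVec u = u - γ • P.mulVec u := by
    intro u
    rw [hM, Matrix.sub_mulVec, Matrix.one_mulVec, Matrix.smul_mulVec]
  intro u v huv
  have hz : M.mulVec (u - v) = 0 := by
    rw [Matrix.mulVec_sub, huv, sub_self]
  set z := u - v with hzdef
  have hfix : ∀ i, z i = γ * P.mulVec z i := by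
    intro i
    have := congrFun (hlin z) i
    rw [hz] at this
    have : (0 : ℝ) = z i - γ * P.mulVec z i := this
    linarith
  have hzero : z = 0 := by
    by_contra hne
    obtain ⟨i, hi, hsup⟩ := Finset.exists_mem_eq_sup' Finset.univ_nonempty (fun x => |z x|)
    have hpos : 0 < |z i| := by
      rcases Function.ne_iff.mp hne with ⟨x, hx⟩
      have : |z x| ≤ |z i| := by
        rw [← hsup]; exact Finset.le_sup' (fun x => |z x|) (Finset.mem_univ x)
      have : 0 < |z x| := abs_pos.mpr hx
      linarith
    have hb : |P.mulVec z i| ≤ |z i| := by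
      have h1 : P.mulVec z i ≤ |z i| := by
        calc P.mulVec z i ≤ Finset.univ.sup' Finset.univ_nonempty z :=
              stoch_mulVec_le_sup' hP z i
          _ ≤ |z i| := by
              obtain ⟨j, _, hj⟩ := Finset.exists_mem_eq_sup' Finset.univ_nonempty z
              rw [hj]
              calc z j ≤ |z j| := le_abs_self _
                _ ≤ |z i| := by rw [← hsup]; exact Finset.le_sup' (fun x => |z x|) (Finset.mem_univ j)
      have h2 : -|z i| ≤ P.mulVec z i := by
        calc -|z i| ≤ Finset.univ.inf' Finset.univ_nonempty z := by
              refine Finset.le_inf' _ _ fun j _ => ?_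
              have : |z j| ≤ |z i| := by
                rw [← hsup]; exact Finset.le_sup' (fun x => |z x|) (Finset.mem_univ j)
              have := neg_abs_le (z j)
              linarith
          _ ≤ P.mulVec z i := stoch_inf'_le_mulVec hP z i
      exact abs_le.mpr ⟨h2, h1⟩
    have : |z i| ≤ γ * |z i| := by
      calc |z i| = |γ * P.mulVec z i| := by rw [← hfix i]
        _ = γ * |P.mulVec z i| := by rw [abs_mul, abs_of_nonneg hγ0]
        _ ≤ γ * |z i| := mul_le_mul_of_nonneg_left hb hγ0
    nlinarith
  exact sub_eq_zero.mp hzero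

end Aux

section Aux2

variable {X A : Type*} [Fintype X] [Nonempty X] [DecidableEq X] [Fintype A] [Nonempty A]

lemma Tpol_apply (p : X → A → X → ℝ) (r : X → A → X → ℝ) (γ : ℝ) (π : X → A)
    (v : X → ℝ) (i : X) :
    Tpol p r γ π v i = ∑ j, p i (π i) j * (r i (π i) j + γ * v j) := by
  have h : Tpol p r γ π v i = rvec p r π i + γ * ∑ j, p i (π i) j * v j := rfl
  rw [h, rvec, Finset.mul_sum]
  rw [← Finset.sum_add_distrib]
  refine Finset.sum_congr rfl fun j _ => ?_
  ring

lemma Tpol_le_Topt (p : X → A → X → ℝ) (r : X → A → X → ℝ) (γ : ℝ) (π : X → A)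
    (v : X → ℝ) (i : X) : Tpol p r γ π v i ≤ Topt p r γ v i := by
  rw [Tpol_apply]
  exact Finset.le_sup' (fun a => ∑ j, p i a j * (r i a j + γ * v j)) (Finset.mem_univ (π i))

lemma Tpol_sub (p : X → A → X → ℝ) (r : X → A → X → ℝ) (γ : ℝ) (π : X → A)
    (u v : X → ℝ) (i : X) :
    Tpol p r γ π u i - Tpol p r γ π v i = γ * (Pmat p π).mulVec (u - v) i := by
  have hu : Tpol p r γ π u i = rvec p r π i + γ * (Pmat p π).mulVec u i := rfl
  have hv : Tpol p r γ π v i = rvec p r π i + γ * (Pmat p π).mulVec v i := rfl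
  rw [hu, hv, Matrix.mulVec_sub]
  have : ((Pmat p π).mulVec u - (Pmat p π).mulVec v) i
      = (Pmat p π).mulVec u i - (Pmat p π).mulVec v i := rfl
  rw [this]; ring

lemma vpi_fixed (p : X → A → X → ℝ) (r : X → A → X → ℝ) {γ : ℝ}
    (hp0 : ∀ i a j, 0 ≤ p i a j) (hp1 : ∀ i a, ∑ j, p i a j = 1)
    (hγ0 : 0 < γ) (hγ1 : γ < 1) (π : X → A) :
    Tpol p r γ π (vpi p r γ π) = vpi p r γ π := by
  have hP := Pmat_stoch p hp0 hp1 π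
  have hdet := stoch_det_unit hP hγ0.le hγ1
  set M := (1 : Matrix X X ℝ) - γ • Pmat p π with hM
  have hmul : M * M⁻¹ = 1 := Matrix.mul_nonsing_inv M hdet
  have h1 : M.mulVec (vpi p r γ π) = rvec p r π := by
    rw [vpi, ← hM, Matrix.mulVec_mulVec, hmul, Matrix.one_mulVec]
  have h2 : M.mulVec (vpi p r γ π)
      = vpi p r γ π - γ • (Pmat p π).mulVec (vpi p r γ π) := by
    rw [hM, Matrix.sub_mulVec, Matrix.one_mulVec, Matrix.smul_mulVec]
  funext i
  have := congrFun (h1.symm.trans h2) i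
  have h3 : rvec p r π i = vpi p r γ π i - γ * (Pmat p π).mulVec (vpi p r γ π) i := this
  have h4 : Tpol p r γ π (vpi p r γ π) i
      = rvec p r π i + γ * (Pmat p π).mulVec (vpi p r γ π) i := rfl
  rw [h4, h3]; ring

lemma vpi_le_vstar (p : X → A → X → ℝ) (r : X → A → X → ℝ) {γ : ℝ}
    (hp0 : ∀ i a j, 0 ≤ p i a j) (hp1 : ∀ i a, ∑ j, p i a j = 1)
    (hγ0 : 0 < γ) (hγ1 : γ < 1) (vstar : X → ℝ) (hfix : Topt p r γ vstar = vstar)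
    (π : X → A) (i : X) : vpi p r γ π i ≤ vstar i := by
  have hP := Pmat_stoch p hp0 hp1 π
  set u : X → ℝ := fun i => vpi p r γ π i - vstar i with hu
  have hkey : ∀ i, u i ≤ γ * (Pmat p π).mulVec u i := by
    intro i
    have hfp := congrFun (vpi_fixed p r hp0 hp1 hγ0 hγ1 π) i
    have hle : Tpol p r γ π vstar i ≤ vstar i := by
      calc Tpol p r γ π vstar i ≤ Topt p r γ vstar i := Tpol_le_Topt p r γ π vstar i
        _ = vstar i := congrFun hfix i
    have hsub := Tpol_sub p r γ π (vpi p r γ π) vstar i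
    have hueq : (vpi p r γ π - vstar) = u := rfl
    rw [hueq] at hsub
    calc u i = vpi p r γ π i - vstar i := rfl
      _ = Tpol p r γ π (vpi p r γ π) i - vstar i := by rw [hfp]
      _ ≤ Tpol p r γ π (vpi p r γ π) i - Tpol p r γ π vstar i := by linarith
      _ = γ * (Pmat p π).mulVec u i := hsub
  have hs : Finset.univ.sup' Finset.univ_nonempty u ≤ 0 := by
    obtain ⟨j, _, hj⟩ := Finset.exists_mem_eq_sup' Finset.univ_nonempty u
    rw [hj]
    have h1 : u j ≤ γ * (Pmat p π).mulVec u j := hkey j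
    have h2 : (Pmat p π).mulVec u j ≤ Finset.univ.sup' Finset.univ_nonempty u :=
      stoch_mulVec_le_sup' hP u j
    rw [hj] at h2
    nlinarith
  have : u i ≤ 0 := le_trans (Finset.le_sup' u (Finset.mem_univ i)) hs
  simpa [hu] using this

end Aux2

/-- Stopping condition for Exact λ Policy Iteration. -/
theorem exact_lambda_PI_stopping
    {X A : Type*} [Fintype X] [Nonempty X] [DecidableEq X] [Fintype A] [Nonempty A]
    (p : X → A → X → ℝ) (r : X → A → X → ℝ) (γ lam : ℝ)
    (hp0 : ∀ i a j, 0 ≤ p i a j) (hp1 : ∀ i a, ∑ j, p i a j = 1)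
    (hγ0 : 0 < γ) (hγ1 : γ < 1) (hlam0 : 0 ≤ lam) (hlam1 : lam ≤ 1)
    (vstar : X → ℝ) (hfix : Topt p r γ vstar = vstar)
    -- exact λ policy iteration (no error)
    (v : ℕ → X → ℝ) (π : ℕ → X → A)
    (hgreedy : ∀ k, Greedy p r γ (π (k + 1)) (v k))
    (hupd : ∀ k, v (k + 1) = Tlam p r γ lam (π (k + 1)) (v k))
    (k0 : ℕ) (ε : ℝ)
    (hstop : spanInf (Topt p r γ (v k0) - v k0) < (1 - γ) / γ * ε) :
    linfNorm (vstar - vpi p r γ (π (k0 + 1))) < ε := by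
  set w := v k0 with hw
  set πp := π (k0 + 1) with hπp
  have hPp := Pmat_stoch p hp0 hp1 πp
  set vp := vpi p r γ πp with hvp
  have h1γ : (0:ℝ) < 1 - γ := by linarith
  -- greedy policy at k0
  have hgr : Tpol p r γ πp w = Topt p r γ w := hgreedy k0
  -- an optimal greedy policy
  have hchoice : ∀ i : X, ∃ a, Topt p r γ vstar i
      = ∑ j, p i a j * (r i a j + γ * vstar j) := by
    intro i
    obtain ⟨a, _, ha⟩ := Finset.exists_mem_eq_sup' Finset.univ_nonempty
      (fun a => ∑ j, p i a j * (r i a j + γ * vstar j))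
    exact ⟨a, ha⟩
  choose πs hπs using hchoice
  have hPs := Pmat_stoch p hp0 hp1 πs
  have hTs : ∀ i, Tpol p r γ πs vstar i = vstar i := by
    intro i
    rw [Tpol_apply, ← hπs i]
    exact congrFun hfix i
  -- notation
  set d : X → ℝ := fun i => Topt p r γ w i - w i with hd
  set δ : ℝ := Finset.univ.sup' Finset.univ_nonempty d with hδ
  set δ' : ℝ := Finset.univ.inf' Finset.univ_nonempty d with hδ'
  have hspan : δ - δ' < (1 - γ) / γ * ε := by
    have h := hstop
    rw [spanInf] at h
    have hfun : (Topt p r γ w - w) = d := rfl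
    rw [hfun] at h
    exact h
  -- u1 = vstar - w
  set u1 : X → ℝ := fun i => vstar i - w i with hu1
  have h1 : ∀ i, u1 i ≤ d i + γ * (Pmat p πs).mulVec u1 i := by
    intro i
    have hsub := Tpol_sub p r γ πs vstar w i
    have heq : (vstar - w) = u1 := rfl
    rw [heq] at hsub
    have hle := Tpol_le_Topt p r γ πs w i
    have hfixi := hTs i
    have hu1i : u1 i = vstar i - w i := rfl
    have hdi : d i = Topt p r γ w i - w i := rfl
    linarith
  -- u2 = vp - w
  set u2 : X → ℝ := fun i => vp i - w i with hu2
  have h2 : ∀ i, u2 i = d i + γ * (Pmat p πp).mulVec u2 i := by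
    intro i
    have hsub := Tpol_sub p r γ πp vp w i
    have heq : (vp - w) = u2 := rfl
    rw [heq] at hsub
    have hfixi := congrFun (vpi_fixed p r hp0 hp1 hγ0 hγ1 πp) i
    have hgri := congrFun hgr i
    have hu2i : u2 i = vp i - w i := rfl
    have hdi : d i = Topt p r γ w i - w i := rfl
    have hvpi : vp i = vpi p r γ πp i := rfl
    linarith
  -- bounds on sup of u1 and inf of u2
  set s1 : ℝ := Finset.univ.sup' Finset.univ_nonempty u1 with hs1def
  set m2 : ℝ := Finset.univ.inf' Finset.univ_nonempty u2 with hm2def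
  have hs1 : s1 ≤ δ / (1 - γ) := by
    obtain ⟨j, _, hj⟩ := Finset.exists_mem_eq_sup' Finset.univ_nonempty u1
    have hdj : d j ≤ δ := Finset.le_sup' d (Finset.mem_univ j)
    have hmv : (Pmat p πs).mulVec u1 j ≤ s1 := stoch_mulVec_le_sup' hPs u1 j
    have hmv' : γ * (Pmat p πs).mulVec u1 j ≤ γ * s1 :=
      mul_le_mul_of_nonneg_left hmv hγ0.le
    have hsj : s1 = u1 j := by rw [hs1def]; exact hj
    rw [le_div_iff₀ h1γ]; nlinarith [h1 j]
  have hm2 : δ' / (1 - γ) ≤ m2 := by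
    obtain ⟨j, _, hj⟩ := Finset.exists_mem_eq_inf' Finset.univ_nonempty u2
    have hdj : δ' ≤ d j := Finset.inf'_le d (Finset.mem_univ j)
    have hmv : m2 ≤ (Pmat p πp).mulVec u2 j := stoch_inf'_le_mulVec hPp u2 j
    have hmv' : γ * m2 ≤ γ * (Pmat p πp).mulVec u2 j :=
      mul_le_mul_of_nonneg_left hmv hγ0.le
    have hmj : m2 = u2 j := by rw [hm2def]; exact hj
    rw [div_le_iff₀ h1γ]; nlinarith [h2 j]
  -- the bound constant is < ε
  have hBlt : γ / (1 - γ) * (δ - δ') < ε := by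
    have hcpos : (0:ℝ) < γ / (1 - γ) := by positivity
    have h := mul_lt_mul_of_pos_left hspan hcpos
    have he : γ / (1 - γ) * ((1 - γ) / γ * ε) = ε := by
      field_simp
    rwa [he] at h
  -- pointwise bound on vstar - vp
  have hpt : ∀ i, vstar i - vp i < ε := by
    intro i
    have hA := h1 i
    have hB := h2 i
    have hmv1 : (Pmat p πs).mulVec u1 i ≤ s1 := stoch_mulVec_le_sup' hPs u1 i
    have hmv2 : m2 ≤ (Pmat p πp).mulVec u2 i := stoch_inf'_le_mulVec hPp u2 i
    have hm1 : γ * (Pmat p πs).mulVec u1 i ≤ γ * (δ / (1 - γ)) :=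
      mul_le_mul_of_nonneg_left (le_trans hmv1 hs1) hγ0.le
    have hm2' : γ * (δ' / (1 - γ)) ≤ γ * (Pmat p πp).mulVec u2 i :=
      mul_le_mul_of_nonneg_left (le_trans hm2 hmv2) hγ0.le
    have hre : γ * (δ / (1 - γ)) - γ * (δ' / (1 - γ)) = γ / (1 - γ) * (δ - δ') := by
      ring
    have hu1i : u1 i = vstar i - w i := rfl
    have hu2i : u2 i = vp i - w i := rfl
    linarith
  -- nonnegativity
  have hnn : ∀ i, 0 ≤ vstar i - vp i := by
    intro i
    have := vpi_le_vstar p r hp0 hp1 hγ0 hγ1 vstar hfix πp i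
    have hvpi : vp i = vpi p r γ πp i := rfl
    linarith
  rw [linfNorm]
  rw [Finset.sup'_lt_iff]
  intro i _
  have : |(vstar - vp) i| = vstar i - vp i := by
    have : (vstar - vp) i = vstar i - vp i := rfl
    rw [this]
    exact abs_of_nonneg (hnn i)
  rw [this]
  exact hpt i
end

section
/- As soon as λ > 0, there exists no norm for which the operator by which exact λ Policy Iteration updates the value from one iteration to the next is a contraction. Concretely: fix γ ∈ (0,1) and λ ∈ (0,1], and consider the deterministic MDP with two states {1,2} and two actions {change, stay}, rewards r(1)=0, r(2)=1 (reward depending only on the current state), and deterministic transitions P_change(2|1)=P_change(1|2)=P_stay(1|1)=P_stay(2|2)=1. Then for every norm N on ℝ² and every constant C ≥ 0, there exist value functions v, v' and policies π greedy with respect to v and π' greedy with respect to v' such that N(T_λ^{π'} v' − T_λ^π v) > C · N(v' − v). (In the proof, v = (ε, 0) and v' = (0, ε) for small ε > 0 give T_λ^{π'} v' − T_λ^π v = (1/(1−λγ) − 1, 1/(1−λγ) − 1) while v' − v = (−ε, ε).) -/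
open Matrix Filter Finset

/-- Deterministic two-state MDP: action `0` = change state, action `1` = stay. -/
noncomputable def pEx : Fin 2 → Fin 2 → Fin 2 → ℝ :=
  fun i a j => if a = 1 then (if j = i then 1 else 0) else (if j = i then 0 else 1)

/-- Reward depending only on the current state: `r 0 = 0`, `r 1 = 1`. -/
noncomputable def rEx : Fin 2 → Fin 2 → Fin 2 → ℝ :=
  fun i _ _ => if i = 0 then 0 else 1

theorem sup2' (f : Fin 2 → ℝ) : Finset.univ.sup' Finset.univ_nonempty f = max (f 0) (f 1) := by
  apply le_antisymm
  · exact Finset.sup'_le _ _ fun i _ => by fin_cases i <;> simp [le_max_left, le_max_right]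
  · exact max_le (Finset.le_sup' f (Finset.mem_univ 0)) (Finset.le_sup' f (Finset.mem_univ 1))

theorem PmatA : Pmat pEx ![1,0] = !![1,0;1,0] := by
  ext i j; fin_cases i <;> fin_cases j <;> simp [Pmat, pEx]

theorem PmatB : Pmat pEx ![0,1] = !![0,1;0,1] := by
  ext i j; fin_cases i <;> fin_cases j <;> simp [Pmat, pEx]

theorem invA' (c : ℝ) (hc : 1 - c ≠ 0) :
    ((1 : Matrix (Fin 2) (Fin 2) ℝ) - c • !![1,0;1,0])⁻¹ = !![1/(1-c),0; c/(1-c),1] := by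
  apply Matrix.inv_eq_right_inv
  ext i j; fin_cases i <;> fin_cases j <;>
    simp [Matrix.mul_apply, Fin.sum_univ_two, Matrix.one_apply] <;> field_simp <;> ring

theorem invB' (c : ℝ) (hc : 1 - c ≠ 0) :
    ((1 : Matrix (Fin 2) (Fin 2) ℝ) - c • !![0,1;0,1])⁻¹ = !![1, c/(1-c); 0, 1/(1-c)] := by
  apply Matrix.inv_eq_right_inv
  ext i j; fin_cases i <;> fin_cases j <;>
    simp [Matrix.mul_apply, Fin.sum_univ_two, Matrix.one_apply] <;> field_simp <;> ring

theorem greedy_pair (γ lam : ℝ) (hγ0 : 0 < γ) (ε : ℝ) (hε : 0 < ε) :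
    Greedy pEx rEx γ ![1,0] ![ε,0] ∧ Greedy pEx rEx γ ![0,1] ![0,ε] := by
  constructor <;>
  · funext i
    rw [show ∀ w, Topt pEx rEx γ w i =
      max (∑ j, pEx i 0 j * (rEx i 0 j + γ * w j))
          (∑ j, pEx i 1 j * (rEx i 1 j + γ * w j)) from fun w => sup2' _]
    fin_cases i <;>
      simp [Tpol, rvec, Pmat, pEx, rEx, Matrix.mulVec, dotProduct,
        Fin.sum_univ_two, Matrix.vecHead, Matrix.vecTail]
    all_goals positivity

theorem tlam_diff (γ lam : ℝ) (ε : ℝ) (hcne : 1 - lam * γ ≠ 0) :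
    Tlam pEx rEx γ lam ![0,1] ![0,ε] - Tlam pEx rEx γ lam ![1,0] ![ε,0]
      = (lam * γ / (1 - lam * γ)) • ![(1:ℝ),1] := by
  unfold Tlam
  rw [PmatA, PmatB, invA' (lam*γ) hcne, invB' (lam*γ) hcne]
  funext i
  fin_cases i <;>
    simp [rvec, pEx, rEx, Matrix.mulVec, dotProduct, Fin.sum_univ_two,
      Matrix.vecHead, Matrix.vecTail] <;>
    field_simp <;> ring

/-- As soon as λ > 0, no norm makes the exact λ Policy Iteration update a contraction:
on the two-state example, for every norm `N` and every `C ≥ 0` there are values `v, v'`,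
with greedy policies `π, π'`, such that `N (T_λ^{π'} v' - T_λ^π v) > C * N (v' - v)`. -/
theorem lambda_PI_no_contraction
    (γ lam : ℝ) (hγ0 : 0 < γ) (hγ1 : γ < 1) (hlam0 : 0 < lam) (hlam1 : lam ≤ 1)
    (N : (Fin 2 → ℝ) → ℝ)
    (hN0 : ∀ u, 0 ≤ N u)
    (hNdef : ∀ u, N u = 0 ↔ u = 0)
    (hNsmul : ∀ (c : ℝ) (u : Fin 2 → ℝ), N (c • u) = |c| * N u)
    (hNadd : ∀ u w : Fin 2 → ℝ, N (u + w) ≤ N u + N w)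
    (C : ℝ) (hC : 0 ≤ C) :
    ∃ (v v' : Fin 2 → ℝ) (π π' : Fin 2 → Fin 2),
      Greedy pEx rEx γ π v ∧ Greedy pEx rEx γ π' v' ∧
      C * N (v' - v) < N (Tlam pEx rEx γ lam π' v' - Tlam pEx rEx γ lam π v) := by
  have hc0 : 0 < lam * γ := mul_pos hlam0 hγ0
  have hc1 : lam * γ < 1 := lt_of_le_of_lt (by nlinarith) hγ1
  have hcne : 1 - lam * γ ≠ 0 := by linarith
  set k : ℝ := lam * γ / (1 - lam * γ) with hkdef
  have hk0 : 0 < k := div_pos hc0 (by linarith)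
  set n1 : ℝ := N ![1,1] with hn1def
  set n2 : ℝ := N ![-1,1] with hn2def
  have hn1 : 0 < n1 := by
    rcases lt_or_eq_of_le (hN0 ![1,1]) with h | h
    · exact h
    · exfalso
      have h2 := (hNdef ![1,1]).mp h.symm
      have h0 : ((![1,1] : Fin 2 → ℝ) 0) = 0 := by rw [h2]; rfl
      simp at h0
  have hn2 : 0 ≤ n2 := hN0 _
  set ε : ℝ := k * n1 / (2 * (C * n2 + 1)) with hεdef
  have hden : 0 < 2 * (C * n2 + 1) := by positivity
  have hε : 0 < ε := by positivity
  obtain ⟨hg1, hg2⟩ := greedy_pair γ lam hγ0 ε hε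
  refine ⟨![ε, 0], ![0, ε], ![1, 0], ![0, 1], hg1, hg2, ?_⟩
  have hvv : (![0,ε] : Fin 2 → ℝ) - ![ε,0] = ε • ![-1,1] := by
    funext i; fin_cases i <;> simp
  rw [tlam_diff γ lam ε hcne, hvv, hNsmul, hNsmul, abs_of_pos hk0, abs_of_pos hε,
    ← hn1def, ← hn2def]
  have hkn : k * n1 = ε * (2 * (C * n2 + 1)) := by
    rw [hεdef]; field_simp
  nlinarith [mul_nonneg (mul_nonneg hC hn2) hε.le]
end

section
/- Stopping condition for Exact Value Iteration: run Value Iteration with no error, i.e. v_{k+1} = T v_k. If at some iteration k₀ the difference between two subsequent iterates satisfies spn_∞(v_{k₀+1} − v_{k₀}) < ((1−γ)/γ)·ε, then the greedy policy π_{k₀+1} with respect to v_{k₀} is ε-optimal: ‖v_* − v^{π_{k₀+1}}‖_∞ < ε. -/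
open Matrix Filter Finset

section VIaux

variable {X : Type*} {A : Type*} [Fintype X] [Nonempty X] [DecidableEq X]
  [Fintype A] [Nonempty A]

lemma sum_mul_le_sup'_VI (c u : X → ℝ) (hc : ∀ j, 0 ≤ c j) (hs : ∑ j, c j = 1) :
    ∑ j, c j * u j ≤ Finset.univ.sup' Finset.univ_nonempty u := by
  calc ∑ j, c j * u j
      ≤ ∑ j, c j * (Finset.univ.sup' Finset.univ_nonempty u) :=
        Finset.sum_le_sum fun j _ => mul_le_mul_of_nonneg_left
          (Finset.le_sup' u (Finset.mem_univ j)) (hc j)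
    _ = _ := by rw [← Finset.sum_mul, hs, one_mul]

lemma Tpol_sub_VI (p : X → A → X → ℝ) (r : X → A → X → ℝ) (γ : ℝ) (π : X → A)
    (u u' : X → ℝ) (i : X) :
    Tpol p r γ π u i - Tpol p r γ π u' i = γ * ∑ j, p i (π i) j * (u j - u' j) := by
  have h : ∑ j, p i (π i) j * (u j - u' j)
      = ∑ j, p i (π i) j * u j - ∑ j, p i (π i) j * u' j := by
    rw [← Finset.sum_sub_distrib]; exact Finset.sum_congr rfl fun j _ => by ring
  simp only [Tpol, Pi.add_apply, Pi.smul_apply, smul_eq_mul, Matrix.mulVec,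
    dotProduct, Pmat, Matrix.of_apply]
  rw [h]; ring

lemma Tpol_eq_sum_VI (p : X → A → X → ℝ) (r : X → A → X → ℝ) (γ : ℝ) (π : X → A)
    (u : X → ℝ) (i : X) :
    Tpol p r γ π u i = ∑ j, p i (π i) j * (r i (π i) j + γ * u j) := by
  simp only [Tpol, rvec, Pi.add_apply, Pi.smul_apply, smul_eq_mul, Matrix.mulVec,
    dotProduct, Pmat, Matrix.of_apply, Finset.mul_sum]
  rw [← Finset.sum_add_distrib]; exact Finset.sum_congr rfl fun j _ => by ring

lemma Tpol_le_Topt_VI (p : X → A → X → ℝ) (r : X → A → X → ℝ) (γ : ℝ) (π : X → A)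
    (u : X → ℝ) (i : X) :
    Tpol p r γ π u i ≤ Topt p r γ u i := by
  rw [Tpol_eq_sum_VI]
  exact Finset.le_sup' (fun a => ∑ j, p i a j * (r i a j + γ * u j)) (Finset.mem_univ (π i))

lemma Topt_sub_le_VI (p : X → A → X → ℝ) (r : X → A → X → ℝ) (γ : ℝ)
    (hp0 : ∀ i a j, 0 ≤ p i a j) (hp1 : ∀ i a, ∑ j, p i a j = 1) (hγ0 : 0 ≤ γ)
    (u u' : X → ℝ) (i : X) :
    Topt p r γ u i - Topt p r γ u' i
      ≤ γ * Finset.univ.sup' Finset.univ_nonempty (fun j => u j - u' j) := by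
  obtain ⟨a, -, ha⟩ := Finset.exists_mem_eq_sup' Finset.univ_nonempty
    (fun a => ∑ j, p i a j * (r i a j + γ * u j))
  have h1 : Topt p r γ u i = ∑ j, p i a j * (r i a j + γ * u j) := ha
  have h2 : ∑ j, p i a j * (r i a j + γ * u' j) ≤ Topt p r γ u' i :=
    Finset.le_sup' (fun a => ∑ j, p i a j * (r i a j + γ * u' j)) (Finset.mem_univ a)
  have h3 : ∑ j, p i a j * (r i a j + γ * u j) - ∑ j, p i a j * (r i a j + γ * u' j)
      = γ * ∑ j, p i a j * (u j - u' j) := by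
    rw [Finset.mul_sum, ← Finset.sum_sub_distrib]
    exact Finset.sum_congr rfl fun j _ => by ring
  have h4 : ∑ j, p i a j * (u j - u' j)
      ≤ Finset.univ.sup' Finset.univ_nonempty (fun j => u j - u' j) :=
    sum_mul_le_sup'_VI _ _ (fun j => hp0 i a j) (hp1 i a)
  have := mul_le_mul_of_nonneg_left h4 hγ0
  linarith

lemma vpi_fixed_VI (p : X → A → X → ℝ) (r : X → A → X → ℝ) (γ : ℝ)
    (hp0 : ∀ i a j, 0 ≤ p i a j) (hp1 : ∀ i a, ∑ j, p i a j = 1)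
    (hγ0 : 0 < γ) (hγ1 : γ < 1) (π : X → A) :
    Tpol p r γ π (vpi p r γ π) = vpi p r γ π := by
  set P := Pmat p π with hP
  set M := (1 : Matrix X X ℝ) - γ • P with hMdef
  have hMv : ∀ x : X → ℝ, M.mulVec x = x - γ • P.mulVec x := by
    intro x
    rw [hMdef, Matrix.sub_mulVec, Matrix.one_mulVec, Matrix.smul_mulVec]
  have hinj : Function.Injective M.mulVec := by
    intro x y hxy
    have hz : M.mulVec (x - y) = 0 := by
      rw [Matrix.mulVec_sub, hxy, sub_self]
    set z := x - y with hzdef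
    have hzz : ∀ i, z i = γ * (P.mulVec z) i := by
      intro i
      have := congrFun (hMv z) i
      rw [hz] at this
      have h0 : (0 : X → ℝ) i = 0 := rfl
      rw [h0] at this
      simp only [Pi.sub_apply, Pi.smul_apply, smul_eq_mul] at this
      linarith
    set N := Finset.univ.sup' Finset.univ_nonempty (fun i => |z i|) with hN
    have hNle : N ≤ γ * N := by
      apply Finset.sup'_le
      intro i _
      have habs : |(P.mulVec z) i| ≤ N := by
        calc |(P.mulVec z) i| = |∑ j, P i j * z j| := by
              simp [Matrix.mulVec, dotProduct]
          _ ≤ ∑ j, |P i j * z j| := Finset.abs_sum_le_sum_abs _ _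
          _ = ∑ j, P i j * |z j| := Finset.sum_congr rfl fun j _ => by
              rw [abs_mul, abs_of_nonneg (by simp [hP, Pmat]; exact hp0 i (π i) j)]
          _ ≤ N := by
              apply sum_mul_le_sup'_VI
              · intro j; simp [hP, Pmat]; exact hp0 i (π i) j
              · simp [hP, Pmat]; exact hp1 i (π i)
      calc |z i| = γ * |(P.mulVec z) i| := by
            rw [hzz i, abs_mul, abs_of_nonneg hγ0.le]
        _ ≤ γ * N := mul_le_mul_of_nonneg_left habs hγ0.le
    have hN0 : 0 ≤ N := le_trans (abs_nonneg _)
      (Finset.le_sup' (fun i => |z i|) (Finset.mem_univ (Classical.arbitrary X)))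
    have hNz : N ≤ 0 := by nlinarith
    have : ∀ i, z i = 0 := by
      intro i
      have : |z i| ≤ N := Finset.le_sup' (fun i => |z i|) (Finset.mem_univ i)
      have := abs_nonneg (z i)
      have : |z i| = 0 := le_antisymm (by linarith) (abs_nonneg _)
      exact abs_eq_zero.mp this
    have : z = 0 := funext this
    rw [hzdef] at this
    exact sub_eq_zero.mp this
  have hu : IsUnit M := Matrix.mulVec_injective_iff_isUnit.mp hinj
  have hdet : IsUnit M.det := (Matrix.isUnit_iff_isUnit_det M).mp hu
  have hMM : M * M⁻¹ = 1 := Matrix.mul_nonsing_inv M hdet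
  have hfix : M.mulVec (vpi p r γ π) = rvec p r π := by
    rw [vpi, Matrix.mulVec_mulVec, hMM, Matrix.one_mulVec]
  have hr : rvec p r π = vpi p r γ π - γ • P.mulVec (vpi p r γ π) := by
    rw [← hMv, hfix]
  rw [Tpol, ← hP, hr]
  abel

end VIaux

/-- Stopping condition for Exact Value Iteration. -/
theorem exact_VI_stopping
    {X A : Type*} [Fintype X] [Nonempty X] [DecidableEq X] [Fintype A] [Nonempty A]
    (p : X → A → X → ℝ) (r : X → A → X → ℝ) (γ : ℝ)
    (hp0 : ∀ i a j, 0 ≤ p i a j) (hp1 : ∀ i a, ∑ j, p i a j = 1)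
    (hγ0 : 0 < γ) (hγ1 : γ < 1)
    (vstar : X → ℝ) (hfix : Topt p r γ vstar = vstar)
    -- exact value iteration
    (v : ℕ → X → ℝ) (hupd : ∀ k, v (k + 1) = Topt p r γ (v k))
    (k0 : ℕ) (ε : ℝ)
    (hstop : spanInf (v (k0 + 1) - v k0) < (1 - γ) / γ * ε)
    -- `πg` is the greedy policy with respect to `v k0`
    (πg : X → A) (hπg : Greedy p r γ πg (v k0)) :
    linfNorm (vstar - vpi p r γ πg) < ε := by
  classical
  have h1γ : (0:ℝ) < 1 - γ := by linarith
  set vp := vpi p r γ πg with hvpdef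
  have hfixp : Tpol p r γ πg vp = vp := vpi_fixed_VI p r γ hp0 hp1 hγ0 hγ1 πg
  have hg : Tpol p r γ πg (v k0) = Topt p r γ (v k0) := hπg
  unfold spanInf at hstop
  set cmax := Finset.univ.sup' Finset.univ_nonempty (v (k0 + 1) - v k0) with hcm
  set cmin := Finset.univ.inf' Finset.univ_nonempty (v (k0 + 1) - v k0) with hcn
  set M1 := Finset.univ.sup' Finset.univ_nonempty (fun j => vstar j - v k0 j) with hM1def
  set M2 := Finset.univ.sup' Finset.univ_nonempty (fun j => v k0 j - vp j) with hM2def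
  set M3 := Finset.univ.sup' Finset.univ_nonempty (fun j => vp j - vstar j) with hM3def
  have hA : ∀ i, vstar i - v (k0 + 1) i ≤ γ * M1 := by
    intro i
    have e1 : vstar i - v (k0 + 1) i = Topt p r γ vstar i - Topt p r γ (v k0) i := by
      rw [hfix, ← hupd k0]
    rw [e1, hM1def]
    exact Topt_sub_le_VI p r γ hp0 hp1 hγ0.le vstar (v k0) i
  have hB : ∀ i, v (k0 + 1) i - vp i ≤ γ * M2 := by
    intro i
    have e2 : v (k0 + 1) i - vp i = γ * ∑ j, p i (πg i) j * (v k0 j - vp j) := by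
      conv_lhs => rw [hupd k0, ← hg, ← hfixp]
      exact Tpol_sub_VI p r γ πg (v k0) vp i
    have hs : ∑ j, p i (πg i) j * (v k0 j - vp j) ≤ M2 :=
      sum_mul_le_sup'_VI (fun j => p i (πg i) j) (fun j => v k0 j - vp j)
        (fun j => hp0 i (πg i) j) (hp1 i (πg i))
    have := mul_le_mul_of_nonneg_left hs hγ0.le
    linarith
  have hM1b : M1 ≤ γ * M1 + cmax := by
    apply Finset.sup'_le
    intro i _
    show vstar i - v k0 i ≤ γ * M1 + cmax
    have ha := hA i
    have hb : v (k0 + 1) i - v k0 i ≤ cmax := by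
      have := Finset.le_sup' (v (k0 + 1) - v k0) (Finset.mem_univ i)
      rw [← hcm] at this
      simpa using this
    linarith
  have hM2b : M2 ≤ γ * M2 - cmin := by
    apply Finset.sup'_le
    intro i _
    show v k0 i - vp i ≤ γ * M2 - cmin
    have hb : cmin ≤ v (k0 + 1) i - v k0 i := by
      have := Finset.inf'_le (v (k0 + 1) - v k0) (Finset.mem_univ i)
      rw [← hcn] at this
      simpa using this
    have := hB i
    linarith
  have hM3b : M3 ≤ γ * M3 := by
    apply Finset.sup'_le
    intro i _
    show vp i - vstar i ≤ γ * M3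
    have e3 : vp i - Tpol p r γ πg vstar i = γ * ∑ j, p i (πg i) j * (vp j - vstar j) := by
      conv_lhs => rw [← hfixp]
      exact Tpol_sub_VI p r γ πg vp vstar i
    have hle : Tpol p r γ πg vstar i ≤ vstar i := by
      have := Tpol_le_Topt_VI p r γ πg vstar i
      rwa [hfix] at this
    have hs : ∑ j, p i (πg i) j * (vp j - vstar j) ≤ M3 :=
      sum_mul_le_sup'_VI (fun j => p i (πg i) j) (fun j => vp j - vstar j)
        (fun j => hp0 i (πg i) j) (hp1 i (πg i))
    have := mul_le_mul_of_nonneg_left hs hγ0.le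
    linarith
  have hM3z : M3 ≤ 0 := by nlinarith
  have hsp0 : 0 ≤ cmax - cmin := by
    have x0 := Classical.arbitrary X
    have h1 := Finset.le_sup' (v (k0 + 1) - v k0) (Finset.mem_univ x0)
    have h2 := Finset.inf'_le (v (k0 + 1) - v k0) (Finset.mem_univ x0)
    rw [← hcm] at h1
    rw [← hcn] at h2
    linarith
  have hε : 0 < ε := by
    by_contra h
    push_neg at h
    have : (1 - γ) / γ * ε ≤ 0 :=
      mul_nonpos_of_nonneg_of_nonpos (div_pos h1γ hγ0).le h
    linarith
  have hkey : γ * M1 + γ * M2 < ε := by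
    have h1 : (1 - γ) * M1 ≤ cmax := by nlinarith
    have h2 : (1 - γ) * M2 ≤ -cmin := by nlinarith
    have h3 : γ * (cmax - cmin) < (1 - γ) * ε := by
      have := mul_lt_mul_of_pos_left hstop hγ0
      rw [show γ * ((1 - γ) / γ * ε) = (1 - γ) * ε from by field_simp] at this
      linarith
    have h4 : (1 - γ) * (γ * M1 + γ * M2) ≤ γ * (cmax - cmin) := by
      nlinarith [mul_le_mul_of_nonneg_left h1 hγ0.le, mul_le_mul_of_nonneg_left h2 hγ0.le]
    nlinarith
  rw [linfNorm]
  rw [Finset.sup'_lt_iff]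
  intro i _
  rw [Pi.sub_apply, abs_lt]
  constructor
  · have hub : vp i - vstar i ≤ M3 :=
      Finset.le_sup' (fun j => vp j - vstar j) (Finset.mem_univ i)
    linarith
  · have := hA i
    have := hB i
    linarith
end

section
/- Asymptotic performance of Approximate Value Iteration in weighted L_p norm: run Approximate Value Iteration v_{k+1} = T v_k + ε_{k+1} with π_k greedy with respect to v_{k−1}, and let Q_{kj}, Q'_{kj} be the stochastic matrices of the componentwise AVI analysis. Choose any p ≥ 1 and any distribution μ on X. If the approximation errors are uniformly bounded in the sense that ‖ε_j‖_{p, ½μ(Q_{kj}+Q'_{kj})} ≤ ε for all j < k, then limsup_k ‖v_* − v^{π_k}‖_{p,μ} ≤ (2γ/(1−γ)²)·ε. -/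
open Matrix Filter Finset

set_option linter.unusedSectionVars false

section AuxInfra
variable {X : Type*} {A : Type*} [Fintype X] [Nonempty X] [DecidableEq X]
  [Fintype A] [Nonempty A]

namespace AVIaux

lemma mulVec_nonneg {M : Matrix X X ℝ} (hM : ∀ i j, 0 ≤ M i j) {u : X → ℝ}
    (hu : 0 ≤ u) : 0 ≤ M *ᵥ u := by
  intro i
  exact Finset.sum_nonneg fun j _ => mul_nonneg (hM i j) (hu j)

lemma mulVec_mono {M : Matrix X X ℝ} (hM : ∀ i j, 0 ≤ M i j) {u w : X → ℝ}
    (h : u ≤ w) : M *ᵥ u ≤ M *ᵥ w := by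
  intro i
  exact Finset.sum_le_sum fun j _ => mul_le_mul_of_nonneg_left (h j) (hM i j)

lemma mulVec_sumF {M : Matrix X X ℝ} {ι : Type*} (s : Finset ι) (f : ι → X → ℝ) :
    M *ᵥ (∑ j ∈ s, f j) = ∑ j ∈ s, M *ᵥ (f j) := by
  ext i
  simp only [Matrix.mulVec, dotProduct, Finset.sum_apply, Finset.mul_sum]
  exact Finset.sum_comm

lemma mul_nonneg_entries {M N : Matrix X X ℝ} (hM : ∀ i j, 0 ≤ M i j)
    (hN : ∀ i j, 0 ≤ N i j) : ∀ i j, 0 ≤ (M * N) i j := by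
  intro i j
  rw [Matrix.mul_apply]
  exact Finset.sum_nonneg fun k _ => mul_nonneg (hM i k) (hN k j)

lemma stoch_mulVec_one {M : Matrix X X ℝ} (hM : IsStochastic M) :
    M *ᵥ (fun _ => (1:ℝ)) = fun _ => (1:ℝ) := by
  ext i
  simp [Matrix.mulVec, dotProduct, hM.2 i]

lemma stoch_mul {M N : Matrix X X ℝ} (hM : IsStochastic M) (hN : IsStochastic N) :
    IsStochastic (M * N) := by
  refine ⟨mul_nonneg_entries hM.1 hN.1, fun i => ?_⟩
  calc ∑ j, (M * N) i j = ∑ k, M i k * ∑ j, N k j := by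
        simp only [Matrix.mul_apply]
        rw [Finset.sum_comm]
        simp [Finset.mul_sum]
    _ = 1 := by
        have : ∀ k, M i k * ∑ j, N k j = M i k := fun k => by rw [hN.2 k, mul_one]
        rw [Finset.sum_congr rfl fun k _ => this k, hM.2 i]

lemma stoch_one : IsStochastic (1 : Matrix X X ℝ) := by
  constructor
  · intro i j
    by_cases h : i = j <;> simp [Matrix.one_apply, h]
  · intro i; simp [Matrix.one_apply]

lemma stoch_pow {M : Matrix X X ℝ} (hM : IsStochastic M) (n : ℕ) :
    IsStochastic (M ^ n) := by
  induction n with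
  | zero => simpa using stoch_one
  | succ n ih => rw [pow_succ]; exact stoch_mul ih hM

end AVIaux
end AuxInfra


section AuxInfra2
variable {X : Type*} {A : Type*} [Fintype X] [Nonempty X] [DecidableEq X]
  [Fintype A] [Nonempty A]

namespace AVIaux

lemma descProd_of_le (M : ℕ → Matrix X X ℝ) {j k : ℕ} (h : k ≤ j) :
    descProd M j k = 1 := by
  unfold descProd
  rw [Nat.sub_eq_zero_of_le h]
  simp

lemma descProd_succ (M : ℕ → Matrix X X ℝ) {j m : ℕ} (h : j ≤ m) :
    descProd M j (m + 1) = M (m + 1) * descProd M j m := by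
  unfold descProd
  rw [Nat.succ_sub h, List.range_succ_eq_map]
  simp only [List.map_cons, List.prod_cons, Nat.sub_zero, List.map_map]
  congr 2
  ext t
  simp [Function.comp, Nat.succ_sub_succ]

lemma stoch_listProd (L : List (Matrix X X ℝ)) (h : ∀ M ∈ L, IsStochastic M) :
    IsStochastic L.prod := by
  induction L with
  | nil => simpa using stoch_one (X := X)
  | cons a L ih =>
      rw [List.prod_cons]
      exact stoch_mul (h a (by simp)) (ih fun M hM => h M (by simp [hM]))

lemma stoch_descProd (M : ℕ → Matrix X X ℝ) (hM : ∀ l, IsStochastic (M l)) (j k : ℕ) :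
    IsStochastic (descProd M j k) := by
  apply stoch_listProd
  intro N hN
  simp only [descProd, List.mem_map] at hN
  obtain ⟨t, _, rfl⟩ := hN
  exact hM _

lemma resolvent_det_ne_zero {P : Matrix X X ℝ} (hP : IsStochastic P) {γ : ℝ}
    (hγ0 : 0 ≤ γ) (hγ1 : γ < 1) : ((1 : Matrix X X ℝ) - γ • P).det ≠ 0 := by
  intro hdet
  obtain ⟨w, hw0, hw⟩ := Matrix.exists_mulVec_eq_zero_iff.mpr hdet
  have hwe : w = γ • (P *ᵥ w) := by
    have h1 : ((1 : Matrix X X ℝ) - γ • P) *ᵥ w = w - γ • (P *ᵥ w) := by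
      rw [Matrix.sub_mulVec, Matrix.one_mulVec, Matrix.smul_mulVec]
    rw [h1, sub_eq_zero] at hw
    exact hw
  obtain ⟨x, -, hx⟩ := Finset.exists_mem_eq_sup' (Finset.univ_nonempty (α := X))
    (fun i => |w i|)
  set m := |w x| with hm
  have hle : ∀ i, |w i| ≤ m :=
    fun i => le_trans (Finset.le_sup' (fun i => |w i|) (Finset.mem_univ i)) (le_of_eq hx)
  have hkey : m ≤ γ * m := by
    calc m = |w x| := rfl
      _ = γ * |(P *ᵥ w) x| := by
          rw [congrFun hwe x]; simp [abs_mul, abs_of_nonneg hγ0]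
      _ ≤ γ * ∑ j, P x j * |w j| := by
          apply mul_le_mul_of_nonneg_left _ hγ0
          calc |(P *ᵥ w) x| ≤ ∑ j, |P x j * w j| := Finset.abs_sum_le_sum_abs _ _
            _ = ∑ j, P x j * |w j| := by
                refine Finset.sum_congr rfl fun j _ => ?_
                rw [abs_mul, abs_of_nonneg (hP.1 x j)]
      _ ≤ γ * ∑ j, P x j * m := by
          apply mul_le_mul_of_nonneg_left _ hγ0
          exact Finset.sum_le_sum fun j _ => mul_le_mul_of_nonneg_left (hle j) (hP.1 x j)
      _ = γ * m := by rw [← Finset.sum_mul, hP.2 x, one_mul]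
  have hm0 : 0 ≤ m := le_trans (abs_nonneg _) (hle (Classical.arbitrary X))
  have hmz : m ≤ 0 := by nlinarith
  apply hw0
  ext i
  have := hle i
  have : |w i| ≤ 0 := le_trans this hmz
  simpa using le_antisymm this (abs_nonneg _)

end AVIaux
end AuxInfra2

section AuxInfra3
variable {X : Type*} [Fintype X] [Nonempty X] [DecidableEq X]

namespace AVIaux

variable {P : Matrix X X ℝ} {γ : ℝ}

lemma resolvent_isUnit (hP : IsStochastic P) (hγ0 : 0 ≤ γ) (hγ1 : γ < 1) :
    IsUnit ((1 : Matrix X X ℝ) - γ • P).det :=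
  isUnit_iff_ne_zero.mpr (resolvent_det_ne_zero hP hγ0 hγ1)

lemma resolvent_mul_inv (hP : IsStochastic P) (hγ0 : 0 ≤ γ) (hγ1 : γ < 1) :
    ((1 : Matrix X X ℝ) - γ • P) * ((1 : Matrix X X ℝ) - γ • P)⁻¹ = 1 :=
  Matrix.mul_nonsing_inv _ (resolvent_isUnit hP hγ0 hγ1)

lemma resolvent_inv_mul (hP : IsStochastic P) (hγ0 : 0 ≤ γ) (hγ1 : γ < 1) :
    ((1 : Matrix X X ℝ) - γ • P)⁻¹ * ((1 : Matrix X X ℝ) - γ • P) = 1 :=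
  Matrix.nonsing_inv_mul _ (resolvent_isUnit hP hγ0 hγ1)

lemma resolvent_cancel (hP : IsStochastic P) (hγ0 : 0 ≤ γ) (hγ1 : γ < 1) (x : X → ℝ) :
    ((1 : Matrix X X ℝ) - γ • P)⁻¹ *ᵥ (((1 : Matrix X X ℝ) - γ • P) *ᵥ x) = x := by
  rw [Matrix.mulVec_mulVec, resolvent_inv_mul hP hγ0 hγ1, Matrix.one_mulVec]

lemma resolvent_inv_nonneg (hP : IsStochastic P) (hγ0 : 0 ≤ γ) (hγ1 : γ < 1) :
    ∀ i j, 0 ≤ ((1 : Matrix X X ℝ) - γ • P)⁻¹ i j := by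
  set Q := ((1 : Matrix X X ℝ) - γ • P)⁻¹ with hQdef
  have hid : ((1 : Matrix X X ℝ) - γ • P) * Q = 1 := resolvent_mul_inv hP hγ0 hγ1
  have hmat : Q = 1 + γ • (P * Q) := by
    apply eq_add_of_sub_eq
    rw [← hid, Matrix.sub_mul, Matrix.one_mul, Matrix.smul_mul]
  have hQe : ∀ i j, Q i j = (1 : Matrix X X ℝ) i j + γ * ∑ k, P i k * Q k j := by
    intro i j
    have h1 := congrFun (congrFun hmat i) j
    simpa [Matrix.add_apply, Matrix.smul_apply, Matrix.mul_apply, smul_eq_mul] using h1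
  intro i j
  obtain ⟨x, -, hx⟩ := Finset.exists_mem_eq_inf' (Finset.univ_nonempty (α := X))
    (fun i => Q i j)
  set m := Q x j with hm
  have hle : ∀ i, m ≤ Q i j :=
    fun i => le_trans (ge_of_eq hx) (Finset.inf'_le (fun i => Q i j) (Finset.mem_univ i))
  have hkey : γ * m ≤ m := by
    calc γ * m = 0 + γ * ∑ k, P x k * m := by rw [← Finset.sum_mul, hP.2 x, one_mul, zero_add]
      _ ≤ (1 : Matrix X X ℝ) x j + γ * ∑ k, P x k * Q k j := by
          apply add_le_add
          · by_cases h : x = j <;> simp [Matrix.one_apply, h]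
          · apply mul_le_mul_of_nonneg_left _ hγ0
            exact Finset.sum_le_sum fun k _ => mul_le_mul_of_nonneg_left (hle k) (hP.1 x k)
      _ = Q x j := (hQe x j).symm
      _ = m := rfl
  have hm0 : 0 ≤ m := by nlinarith
  exact le_trans hm0 (hle i)

lemma resolvent_inv_const (hP : IsStochastic P) (hγ0 : 0 ≤ γ) (hγ1 : γ < 1) (c : ℝ) :
    ((1 : Matrix X X ℝ) - γ • P)⁻¹ *ᵥ (fun _ => c) = fun _ => c / (1 - γ) := by
  have h1γ : (0:ℝ) < 1 - γ := by linarith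
  have key : ((1 : Matrix X X ℝ) - γ • P) *ᵥ (fun _ => c / (1 - γ)) = fun _ => c := by
    ext i
    have : (P *ᵥ fun _ => c / (1 - γ)) i = c / (1 - γ) := by
      simp [Matrix.mulVec, dotProduct, ← Finset.sum_mul, hP.2 i]
    rw [Matrix.sub_mulVec, Matrix.one_mulVec, Matrix.smul_mulVec]
    simp only [Pi.sub_apply, Pi.smul_apply, this, smul_eq_mul]
    field_simp
  conv_lhs => rw [← key]
  exact resolvent_cancel hP hγ0 hγ1 _

end AVIaux
end AuxInfra3

section AuxBellman
variable {X : Type*} {A : Type*} [Fintype X] [Nonempty X] [DecidableEq X]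
  [Fintype A] [Nonempty A]

namespace AVIaux

variable (p : X → A → X → ℝ) (r : X → A → X → ℝ) (γ : ℝ)

lemma Pmat_stoch (hp0 : ∀ i a j, 0 ≤ p i a j) (hp1 : ∀ i a, ∑ j, p i a j = 1)
    (π : X → A) : IsStochastic (Pmat p π) :=
  ⟨fun i j => hp0 i (π i) j, fun i => hp1 i (π i)⟩

lemma Tpol_apply (π : X → A) (v : X → ℝ) (i : X) :
    Tpol p r γ π v i = ∑ j, p i (π i) j * (r i (π i) j + γ * v j) := by
  simp only [Tpol, Pi.add_apply, Pi.smul_apply, smul_eq_mul, rvec, Matrix.mulVec,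
    dotProduct, Pmat, Matrix.of_apply]
  rw [Finset.mul_sum, ← Finset.sum_add_distrib]
  exact Finset.sum_congr rfl fun j _ => by ring

lemma Tpol_le_Topt (π : X → A) (v : X → ℝ) : Tpol p r γ π v ≤ Topt p r γ v := by
  intro i
  rw [Tpol_apply]
  exact Finset.le_sup' (fun a => ∑ j, p i a j * (r i a j + γ * v j)) (Finset.mem_univ (π i))

lemma Tpol_sub (π : X → A) (u w : X → ℝ) :
    Tpol p r γ π u - Tpol p r γ π w = γ • (Pmat p π *ᵥ (u - w)) := by
  unfold Tpol
  rw [Matrix.mulVec_sub, smul_sub]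
  abel

lemma vpi_fixed (hp0 : ∀ i a j, 0 ≤ p i a j) (hp1 : ∀ i a, ∑ j, p i a j = 1)
    (hγ0 : 0 ≤ γ) (hγ1 : γ < 1) (π : X → A) :
    vpi p r γ π = rvec p r π + γ • (Pmat p π *ᵥ vpi p r γ π) := by
  have hstoch := Pmat_stoch p hp0 hp1 π
  have h1 : ((1 : Matrix X X ℝ) - γ • Pmat p π) *ᵥ vpi p r γ π = rvec p r π := by
    unfold vpi
    rw [Matrix.mulVec_mulVec, resolvent_mul_inv hstoch hγ0 hγ1, Matrix.one_mulVec]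
  have h2 : vpi p r γ π - γ • (Pmat p π *ᵥ vpi p r γ π) = rvec p r π := by
    rw [← h1, Matrix.sub_mulVec, Matrix.one_mulVec, Matrix.smul_mulVec]
  exact eq_add_of_sub_eq h2

lemma vpi_le_vstar (hp0 : ∀ i a j, 0 ≤ p i a j) (hp1 : ∀ i a, ∑ j, p i a j = 1)
    (hγ0 : 0 ≤ γ) (hγ1 : γ < 1) {vstar : X → ℝ} (hfix : Topt p r γ vstar = vstar)
    (π' : X → A) : vpi p r γ π' ≤ vstar := by
  have hstoch := Pmat_stoch p hp0 hp1 π'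
  have h1 : Tpol p r γ π' vstar ≤ vstar :=
    le_of_le_of_eq (Tpol_le_Topt p r γ π' vstar) hfix
  have h2 : rvec p r π' ≤ ((1 : Matrix X X ℝ) - γ • Pmat p π') *ᵥ vstar := by
    rw [Matrix.sub_mulVec, Matrix.one_mulVec, Matrix.smul_mulVec]
    intro i
    have h3 := h1 i
    simp only [Tpol, Pi.add_apply, Pi.smul_apply, smul_eq_mul, Pi.sub_apply] at h3 ⊢
    linarith
  calc vpi p r γ π' = ((1 : Matrix X X ℝ) - γ • Pmat p π')⁻¹ *ᵥ rvec p r π' := rfl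
    _ ≤ ((1 : Matrix X X ℝ) - γ • Pmat p π')⁻¹ *ᵥ
        (((1 : Matrix X X ℝ) - γ • Pmat p π') *ᵥ vstar) :=
      mulVec_mono (resolvent_inv_nonneg hstoch hγ0 hγ1) h2
    _ = vstar := resolvent_cancel hstoch hγ0 hγ1 _

end AVIaux
end AuxBellman

section AuxNorm
variable {X : Type*} [Fintype X] [Nonempty X] [DecidableEq X]

namespace AVIaux

variable {pp : ℝ} {μ : X → ℝ}

lemma wLpNorm_nonneg (hμ : 0 ≤ μ) (u : X → ℝ) : 0 ≤ wLpNorm pp μ u := by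
  apply Real.rpow_nonneg
  exact Finset.sum_nonneg fun x _ =>
    mul_nonneg (hμ x) (Real.rpow_nonneg (abs_nonneg _) _)

lemma wLpNorm_pow (hpp : 1 ≤ pp) (hμ : 0 ≤ μ) (u : X → ℝ) :
    wLpNorm pp μ u ^ pp = ∑ x, μ x * |u x| ^ pp := by
  have hpp0 : pp ≠ 0 := by positivity
  have hs : 0 ≤ ∑ x, μ x * |u x| ^ pp :=
    Finset.sum_nonneg fun x _ => mul_nonneg (hμ x) (Real.rpow_nonneg (abs_nonneg _) _)
  rw [wLpNorm, ← Real.rpow_mul hs, one_div_mul_cancel hpp0, Real.rpow_one]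

lemma wLpNorm_mono (hpp : 1 ≤ pp) (hμ : 0 ≤ μ) {u w : X → ℝ}
    (h : ∀ x, |u x| ≤ |w x|) : wLpNorm pp μ u ≤ wLpNorm pp μ w := by
  apply Real.rpow_le_rpow
  · exact Finset.sum_nonneg fun x _ =>
      mul_nonneg (hμ x) (Real.rpow_nonneg (abs_nonneg _) _)
  · refine Finset.sum_le_sum fun x _ => ?_
    exact mul_le_mul_of_nonneg_left
      (Real.rpow_le_rpow (abs_nonneg _) (h x) (by linarith)) (hμ x)
  · positivity

lemma sum_le_of_wLpNorm_le (hpp : 1 ≤ pp) (hμ : 0 ≤ μ) {u : X → ℝ} {b : ℝ}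
    (hb : 0 ≤ b) (h : wLpNorm pp μ u ≤ b) : ∑ x, μ x * |u x| ^ pp ≤ b ^ pp := by
  have hpp0 : pp ≠ 0 := by positivity
  have hs : 0 ≤ ∑ x, μ x * |u x| ^ pp :=
    Finset.sum_nonneg fun x _ => mul_nonneg (hμ x) (Real.rpow_nonneg (abs_nonneg _) _)
  calc ∑ x, μ x * |u x| ^ pp = wLpNorm pp μ u ^ pp := (wLpNorm_pow hpp hμ u).symm
    _ ≤ b ^ pp := Real.rpow_le_rpow (wLpNorm_nonneg hμ u) h (by linarith)

lemma wLpNorm_add_le (hpp : 1 ≤ pp) (hμ : 0 ≤ μ) {u w : X → ℝ}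
    (hu : 0 ≤ u) (hw : 0 ≤ w) :
    wLpNorm pp μ (u + w) ≤ wLpNorm pp μ u + wLpNorm pp μ w := by
  have hpp0 : pp ≠ 0 := by positivity
  have key : ∀ (z : X → ℝ), 0 ≤ z →
      ∑ x, (μ x ^ (1/pp) * z x) ^ pp = ∑ x, μ x * |z x| ^ pp := by
    intro z hz
    refine Finset.sum_congr rfl fun x _ => ?_
    rw [Real.mul_rpow (Real.rpow_nonneg (hμ x) _) (hz x),
      ← Real.rpow_mul (hμ x), one_div_mul_cancel hpp0, Real.rpow_one,
      abs_of_nonneg (hz x)]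
  have h1 := Real.Lp_add_le_of_nonneg (s := Finset.univ)
    (f := fun x => μ x ^ (1/pp) * u x) (g := fun x => μ x ^ (1/pp) * w x) hpp
    (fun x _ => mul_nonneg (Real.rpow_nonneg (hμ x) _) (hu x))
    (fun x _ => mul_nonneg (Real.rpow_nonneg (hμ x) _) (hw x))
  have h2 : ∀ x, μ x ^ (1/pp) * u x + μ x ^ (1/pp) * w x = μ x ^ (1/pp) * (u + w) x := by
    intro x; simp [mul_add]
  rw [Finset.sum_congr rfl (fun x _ => by rw [h2 x])] at h1
  rw [key u hu, key w hw, key (u + w) (by intro x; exact add_nonneg (hu x) (hw x))] at h1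
  exact h1

lemma wLpNorm_const (hpp : 1 ≤ pp) (hμ : IsDistribution μ) {t : ℝ} (ht : 0 ≤ t) :
    wLpNorm pp μ (fun _ => t) = t := by
  have hpp0 : pp ≠ 0 := by positivity
  rw [wLpNorm]
  simp only [abs_of_nonneg ht, ← Finset.sum_mul]
  rw [hμ.2, one_mul, ← Real.rpow_mul ht, mul_one_div_cancel hpp0, Real.rpow_one]

lemma wLpNorm_zero (hpp : 1 ≤ pp) (μ : X → ℝ) : wLpNorm pp μ (0 : X → ℝ) = 0 := by
  have hpp0 : pp ≠ 0 := by positivity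
  have h2 : (1:ℝ)/pp ≠ 0 := by positivity
  rw [wLpNorm]
  simp only [Pi.zero_apply, abs_zero, Real.zero_rpow hpp0, mul_zero,
    Finset.sum_const_zero]
  exact Real.zero_rpow h2

end AVIaux
end AuxNorm

section AuxInfra6
variable {X : Type*} [Fintype X] [Nonempty X] [DecidableEq X]

namespace AVIaux

lemma Qlike_nonneg {P S : Matrix X X ℝ} (hP : IsStochastic P) (hS : ∀ i j, 0 ≤ S i j)
    {γ : ℝ} (hγ0 : 0 ≤ γ) (hγ1 : γ < 1) (i j : X) :
    0 ≤ ((1-γ) • (((1 : Matrix X X ℝ) - γ • P)⁻¹ * S)) i j := by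
  have h1 : (0:ℝ) ≤ 1 - γ := by linarith
  simp only [Matrix.smul_apply, smul_eq_mul]
  exact mul_nonneg h1 (mul_nonneg_entries (resolvent_inv_nonneg hP hγ0 hγ1) hS i j)

lemma Qlike_rowsum {P S : Matrix X X ℝ} (hP : IsStochastic P) (hS : IsStochastic S)
    {γ : ℝ} (hγ0 : 0 ≤ γ) (hγ1 : γ < 1) (i : X) :
    ∑ j, ((1-γ) • (((1 : Matrix X X ℝ) - γ • P)⁻¹ * S)) i j = 1 := by
  have h1γ : (0:ℝ) < 1 - γ := by linarith
  have h1 : ((1-γ) • (((1 : Matrix X X ℝ) - γ • P)⁻¹ * S)) *ᵥ (fun _ => (1:ℝ))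
      = fun _ => 1 := by
    rw [Matrix.smul_mulVec, ← Matrix.mulVec_mulVec, stoch_mulVec_one hS,
      resolvent_inv_const hP hγ0 hγ1 1]
    ext x
    simp only [Pi.smul_apply, smul_eq_mul]
    field_simp
  have h2 := congrFun h1 i
  simpa [Matrix.mulVec, dotProduct] using h2

lemma Qlike_stoch {P S : Matrix X X ℝ} (hP : IsStochastic P) (hS : IsStochastic S)
    {γ : ℝ} (hγ0 : 0 ≤ γ) (hγ1 : γ < 1) :
    IsStochastic ((1-γ) • (((1 : Matrix X X ℝ) - γ • P)⁻¹ * S)) :=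
  ⟨Qlike_nonneg hP hS.1 hγ0 hγ1, Qlike_rowsum hP hS hγ0 hγ1⟩

lemma stoch_half_add {M N : Matrix X X ℝ} (hM : IsStochastic M) (hN : IsStochastic N) :
    IsStochastic ((1/2 : ℝ) • (M + N)) := by
  constructor
  · intro i j
    simp only [Matrix.smul_apply, Matrix.add_apply, smul_eq_mul]
    have := hM.1 i j; have := hN.1 i j
    linarith
  · intro i
    simp only [Matrix.smul_apply, Matrix.add_apply, smul_eq_mul, ← Finset.sum_div,
      Finset.mul_sum]
    rw [← Finset.mul_sum, Finset.sum_add_distrib, hM.2 i, hN.2 i]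
    norm_num

lemma stoch_mulVec_const {S : Matrix X X ℝ} (hS : IsStochastic S) (c : ℝ) :
    S *ᵥ (fun _ => c) = fun _ => c := by
  ext i
  simp [Matrix.mulVec, dotProduct, ← Finset.sum_mul, hS.2 i]

end AVIaux
end AuxInfra6

section AuxJensen
variable {X : Type*} [Fintype X] [Nonempty X] [DecidableEq X]

namespace AVIaux

lemma jensen_wLp {pp : ℝ} (hpp : 1 ≤ pp) {μ : X → ℝ} (hμ : IsDistribution μ)
    {s : Finset ℕ} (hs : s.Nonempty) (c : ℕ → ℝ) (hc : ∀ j ∈ s, 0 < c j)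
    (S : ℕ → Matrix X X ℝ) (hS : ∀ j ∈ s, IsStochastic (S j))
    (e : ℕ → X → ℝ) {εb : ℝ} (hεb0 : 0 ≤ εb)
    (hε : ∀ j ∈ s, ∑ y, (Matrix.vecMul μ (S j)) y * |e j y| ^ pp ≤ εb ^ pp) :
    wLpNorm pp μ (∑ j ∈ s, c j • (S j *ᵥ (fun y => |e j y|))) ≤ (∑ j ∈ s, c j) * εb := by
  have hpp0 : (0:ℝ) < pp := lt_of_lt_of_le zero_lt_one hpp
  set C : ℝ := ∑ j ∈ s, c j with hCdef
  have hCpos : 0 < C := Finset.sum_pos hc hs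
  set g : X → ℝ := ∑ j ∈ s, c j • (S j *ᵥ (fun y => |e j y|)) with hgdef
  have hg0 : ∀ x, 0 ≤ g x := by
    intro x
    rw [hgdef, Finset.sum_apply]
    refine Finset.sum_nonneg fun j hj => ?_
    simp only [Pi.smul_apply, smul_eq_mul]
    refine mul_nonneg (hc j hj).le ?_
    exact mulVec_nonneg (hS j hj).1 (fun y => abs_nonneg _) x
  have hpt : ∀ x, |g x| ^ pp
      ≤ C ^ pp * ∑ j ∈ s, (c j / C) * ∑ y, S j x y * |e j y| ^ pp := by
    intro x
    rw [abs_of_nonneg (hg0 x)]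
    have hval : g x = C * ∑ q ∈ s ×ˢ Finset.univ,
        (c q.1 * S q.1 x q.2 / C) * |e q.1 q.2| := by
      rw [hgdef, Finset.sum_apply, Finset.sum_product, Finset.mul_sum]
      refine Finset.sum_congr rfl fun j hj => ?_
      simp only [Pi.smul_apply, smul_eq_mul, Matrix.mulVec, dotProduct]
      rw [Finset.mul_sum, Finset.mul_sum]
      refine Finset.sum_congr rfl fun y _ => ?_
      field_simp
    have hw0 : ∀ q ∈ s ×ˢ (Finset.univ : Finset X), 0 ≤ c q.1 * S q.1 x q.2 / C := by
      intro q hq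
      have hq1 : q.1 ∈ s := (Finset.mem_product.mp hq).1
      have h1 := (hc q.1 hq1).le
      have h2 := (hS q.1 hq1).1 x q.2
      positivity
    have hw1 : ∑ q ∈ s ×ˢ (Finset.univ : Finset X), c q.1 * S q.1 x q.2 / C = 1 := by
      rw [Finset.sum_product]
      have hrow : ∀ j ∈ s, (∑ y, c j * S j x y / C) = c j / C := by
        intro j hj
        rw [← Finset.sum_div, ← Finset.mul_sum, (hS j hj).2 x, mul_one]
      rw [Finset.sum_congr rfl hrow, ← Finset.sum_div, div_self hCpos.ne']
    have hjensen := Real.rpow_arith_mean_le_arith_mean_rpow (s ×ˢ Finset.univ)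
      (fun q => c q.1 * S q.1 x q.2 / C) (fun q => |e q.1 q.2|)
      hw0 hw1 (fun q _ => abs_nonneg _) hpp
    have hsz : 0 ≤ ∑ q ∈ s ×ˢ (Finset.univ : Finset X),
        (c q.1 * S q.1 x q.2 / C) * |e q.1 q.2| :=
      Finset.sum_nonneg fun q hq => mul_nonneg (hw0 q hq) (abs_nonneg _)
    calc g x ^ pp
        = C ^ pp * (∑ q ∈ s ×ˢ Finset.univ,
            (c q.1 * S q.1 x q.2 / C) * |e q.1 q.2|) ^ pp := by
          rw [hval, Real.mul_rpow hCpos.le hsz]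
      _ ≤ C ^ pp * ∑ q ∈ s ×ˢ Finset.univ,
            (c q.1 * S q.1 x q.2 / C) * |e q.1 q.2| ^ pp :=
          mul_le_mul_of_nonneg_left hjensen (Real.rpow_nonneg hCpos.le _)
      _ = C ^ pp * ∑ j ∈ s, (c j / C) * ∑ y, S j x y * |e j y| ^ pp := by
          congr 1
          rw [Finset.sum_product]
          refine Finset.sum_congr rfl fun j _ => ?_
          rw [Finset.mul_sum]
          refine Finset.sum_congr rfl fun y _ => ?_
          ring
  have hsum : ∑ x, μ x * |g x| ^ pp ≤ (C * εb) ^ pp := by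
    have interchange : ∑ x, μ x * (C ^ pp * ∑ j ∈ s, (c j / C) * ∑ y, S j x y * |e j y| ^ pp)
        = C ^ pp * ∑ j ∈ s, (c j / C) * ∑ y, (Matrix.vecMul μ (S j)) y * |e j y| ^ pp := by
      simp only [Matrix.vecMul, dotProduct, Finset.mul_sum, Finset.sum_mul]
      rw [Finset.sum_comm]
      refine Finset.sum_congr rfl fun j _ => ?_
      rw [Finset.sum_comm]
      refine Finset.sum_congr rfl fun y _ => Finset.sum_congr rfl fun x _ => by ring
    calc ∑ x, μ x * |g x| ^ pp
        ≤ ∑ x, μ x * (C ^ pp * ∑ j ∈ s, (c j / C) * ∑ y, S j x y * |e j y| ^ pp) :=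
          Finset.sum_le_sum fun x _ => mul_le_mul_of_nonneg_left (hpt x) (hμ.1 x)
      _ = C ^ pp * ∑ j ∈ s, (c j / C) * ∑ y, (Matrix.vecMul μ (S j)) y * |e j y| ^ pp :=
          interchange
      _ ≤ C ^ pp * ∑ j ∈ s, (c j / C) * εb ^ pp := by
          refine mul_le_mul_of_nonneg_left ?_ (Real.rpow_nonneg hCpos.le _)
          refine Finset.sum_le_sum fun j hj => ?_
          exact mul_le_mul_of_nonneg_left (hε j hj)
            (div_nonneg (hc j hj).le hCpos.le)
      _ = (C * εb) ^ pp := by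
          rw [← Finset.sum_mul, ← Finset.sum_div, div_self hCpos.ne', one_mul,
            Real.mul_rpow hCpos.le hεb0]
  have h1 : wLpNorm pp μ g ≤ ((C * εb) ^ pp) ^ (1/pp) := by
    rw [wLpNorm]
    refine Real.rpow_le_rpow ?_ hsum (by positivity)
    exact Finset.sum_nonneg fun x _ =>
      mul_nonneg (hμ.1 x) (Real.rpow_nonneg (abs_nonneg _) _)
  rwa [← Real.rpow_mul (mul_nonneg hCpos.le hεb0), mul_one_div_cancel hpp0.ne',
    Real.rpow_one] at h1

end AVIaux
end AuxJensen
section AVI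

variable {X : Type*} {A : Type*} [Fintype X] [Nonempty X] [DecidableEq X]
  [Fintype A] [Nonempty A]

/-- `Q_{kj} = (1-γ)(I-γP_k)⁻¹ P_k P_{k-1} ⋯ P_{j+1}`. -/
noncomputable def Qmat (p : X → A → X → ℝ) (γ : ℝ) (π : ℕ → X → A) (k j : ℕ) :
    Matrix X X ℝ :=
  (1 - γ) • (((1 : Matrix X X ℝ) - γ • Pmat p (π k))⁻¹ *
    descProd (fun l => Pmat p (π l)) j k)

/-- `Q'_{kj} = (1-γ)(I-γP_k)⁻¹ (P_*)^{k-j}`. -/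
noncomputable def Qmat' (p : X → A → X → ℝ) (γ : ℝ) (π : ℕ → X → A) (πs : X → A)
    (k j : ℕ) : Matrix X X ℝ :=
  (1 - γ) • (((1 : Matrix X X ℝ) - γ • Pmat p (π k))⁻¹ * (Pmat p πs) ^ (k - j))

/-- Asymptotic performance of Approximate Value Iteration in weighted L_p norm. -/
theorem approx_VI_Lp
    (p : X → A → X → ℝ) (r : X → A → X → ℝ) (γ : ℝ)
    (hp0 : ∀ i a j, 0 ≤ p i a j) (hp1 : ∀ i a, ∑ j, p i a j = 1)
    (hγ0 : 0 < γ) (hγ1 : γ < 1)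
    (vstar : X → ℝ) (hfix : Topt p r γ vstar = vstar)
    (πs : X → A) (hπs : Greedy p r γ πs vstar)
    -- approximate value iteration with errors ε, `π (k+1)` greedy w.r.t. `v k`
    (v : ℕ → X → ℝ) (π : ℕ → X → A) (ε : ℕ → X → ℝ)
    (hgreedy : ∀ k, Greedy p r γ (π (k + 1)) (v k))
    (hupd : ∀ k, v (k + 1) = Topt p r γ (v k) + ε (k + 1))
    (pp : ℝ) (hpp : 1 ≤ pp) (μ : X → ℝ) (hμ : IsDistribution μ)
    -- uniformly bounded approximation errors
    (εb : ℝ)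
    (hεb : ∀ j k : ℕ, j < k →
      wLpNorm pp (mixDist μ (Qmat p γ π k j) (Qmat' p γ π πs k j)) (ε j) ≤ εb) :
    Filter.atTop.limsup (fun k => wLpNorm pp μ (vstar - vpi p r γ (π k))) ≤
      2 * γ / (1 - γ) ^ 2 * εb := by
  classical
  have hγ0' : (0:ℝ) ≤ γ := hγ0.le
  have h1γ : (0:ℝ) < 1 - γ := by linarith
  have hPk : ∀ k, IsStochastic (Pmat p (π k)) := fun k => AVIaux.Pmat_stoch p hp0 hp1 (π k)
  have hPs : IsStochastic (Pmat p πs) := AVIaux.Pmat_stoch p hp0 hp1 πs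
  set D0 : ℝ := linfNorm (vstar - v 0) with hD0def
  have hD00 : 0 ≤ D0 := by
    rw [hD0def, linfNorm]
    refine le_trans (abs_nonneg ((vstar - v 0) (Classical.arbitrary X))) ?_
    exact Finset.le_sup' (fun x => |(vstar - v 0) x|) (Finset.mem_univ _)
  -- nonnegativity of the Q matrices
  have hQst : ∀ k j, IsStochastic (Qmat p γ π k j) := fun k j =>
    AVIaux.Qlike_stoch (hPk k)
      (AVIaux.stoch_descProd (fun l => Pmat p (π l)) hPk j k) hγ0' hγ1
  have hQ'st : ∀ k j, IsStochastic (Qmat' p γ π πs k j) := fun k j =>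
    AVIaux.Qlike_stoch (hPk k) (AVIaux.stoch_pow hPs (k - j)) hγ0' hγ1
  -- stochasticity of the mixture
  have hSst : ∀ k j, IsStochastic
      ((1/2 : ℝ) • (Qmat p γ π k j + Qmat' p γ π πs k j)) := fun k j =>
    AVIaux.stoch_half_add (hQst k j) (hQ'st k j)
  have hmix0 : ∀ k j, 0 ≤ mixDist μ (Qmat p γ π k j) (Qmat' p γ π πs k j) := by
    intro k j y
    simp only [mixDist, Matrix.vecMul, dotProduct, Pi.zero_apply]
    exact Finset.sum_nonneg fun x _ => mul_nonneg (hμ.1 x) ((hSst k j).1 x y)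
  have hεb0 : 0 ≤ εb :=
    le_trans (AVIaux.wLpNorm_nonneg (hmix0 1 0) (ε 0)) (hεb 0 1 one_pos)
  -- unrolled upper bound on v* - v m
  have keyU : ∀ (m : ℕ) (w : ℕ → X → ℝ) (d : X → ℝ),
      (∑ j ∈ Finset.Ico 1 (m+2), γ^(m+1-j) • ((Pmat p πs ^ (m+1-j)) *ᵥ w j))
        + γ^(m+1) • ((Pmat p πs ^ (m+1)) *ᵥ d)
      = γ • (Pmat p πs *ᵥ ((∑ j ∈ Finset.Ico 1 (m+1), γ^(m-j) • ((Pmat p πs ^ (m-j)) *ᵥ w j))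
          + γ^m • ((Pmat p πs ^ m) *ᵥ d))) + w (m+1) := by
    intro m w d
    rw [Finset.sum_Ico_succ_top (by omega : 1 ≤ m+1)]
    rw [Matrix.mulVec_add, AVIaux.mulVec_sumF, smul_add, Finset.smul_sum]
    have hterm : ∀ j ∈ Finset.Ico 1 (m+1), γ^(m+1-j) • ((Pmat p πs ^ (m+1-j)) *ᵥ w j)
        = γ • (Pmat p πs *ᵥ (γ^(m-j) • ((Pmat p πs ^ (m-j)) *ᵥ w j))) := by
      intro j hj
      rw [Finset.mem_Ico] at hj
      have h1 : m + 1 - j = (m - j) + 1 := by omega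
      rw [Matrix.mulVec_smul, Matrix.mulVec_mulVec, h1, pow_succ', pow_succ', mul_smul]
    rw [Finset.sum_congr rfl hterm]
    have h2 : γ^(m+1) • ((Pmat p πs ^ (m+1)) *ᵥ d)
        = γ • (Pmat p πs *ᵥ (γ^m • ((Pmat p πs ^ m) *ᵥ d))) := by
      rw [Matrix.mulVec_smul, Matrix.mulVec_mulVec, pow_succ', pow_succ', mul_smul]
    have h3 : γ^(m+1-(m+1)) • ((Pmat p πs ^ (m+1-(m+1))) *ᵥ w (m+1)) = w (m+1) := by
      simp
    rw [h2, h3]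
    abel
  have honeU : ∀ m, vstar - v (m+1) ≤ γ • (Pmat p πs *ᵥ (vstar - v m)) - ε (m+1) := by
    intro m
    have hsub := AVIaux.Tpol_sub p r γ πs vstar (v m)
    have hvs : Tpol p r γ πs vstar = vstar := hπs.trans hfix
    intro x
    have h1 := AVIaux.Tpol_le_Topt p r γ πs (v m) x
    have h2 := congrFun hsub x
    have h3 := congrFun (hupd m) x
    have h4 := congrFun hvs x
    simp only [Pi.sub_apply, Pi.add_apply, Pi.smul_apply, smul_eq_mul] at h1 h2 h3 h4 ⊢
    linarith
  have hdU : ∀ m : ℕ, vstar - v m ≤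
      (∑ j ∈ Finset.Ico 1 (m+1), γ^(m-j) • ((Pmat p πs ^ (m-j)) *ᵥ (-ε j)))
        + γ^m • ((Pmat p πs ^ m) *ᵥ (vstar - v 0)) := by
    intro m
    induction m with
    | zero => simp
    | succ m ih =>
        have mono : γ • (Pmat p πs *ᵥ (vstar - v m)) ≤ γ • (Pmat p πs *ᵥ
            ((∑ j ∈ Finset.Ico 1 (m+1), γ^(m-j) • ((Pmat p πs ^ (m-j)) *ᵥ (-ε j)))
              + γ^m • ((Pmat p πs ^ m) *ᵥ (vstar - v 0)))) :=
          smul_le_smul_of_nonneg_left (AVIaux.mulVec_mono hPs.1 ih) hγ0'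
        refine le_trans (honeU m) (le_trans (sub_le_sub_right mono _) (le_of_eq ?_))
        rw [keyU m (fun j => -ε j) (vstar - v 0)]
        rw [sub_eq_add_neg]
  -- unrolled lower bound on v* - v m
  have keyL : ∀ (m : ℕ) (w : ℕ → X → ℝ) (d : X → ℝ),
      (∑ j ∈ Finset.Ico 1 (m+2),
          γ^(m+1-j) • (descProd (fun l => Pmat p (π l)) j (m+1) *ᵥ w j))
        + γ^(m+1) • (descProd (fun l => Pmat p (π l)) 0 (m+1) *ᵥ d)
      = γ • (Pmat p (π (m+1)) *ᵥ
          ((∑ j ∈ Finset.Ico 1 (m+1),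
              γ^(m-j) • (descProd (fun l => Pmat p (π l)) j m *ᵥ w j))
            + γ^m • (descProd (fun l => Pmat p (π l)) 0 m *ᵥ d))) + w (m+1) := by
    intro m w d
    rw [Finset.sum_Ico_succ_top (by omega : 1 ≤ m+1)]
    rw [Matrix.mulVec_add, AVIaux.mulVec_sumF, smul_add, Finset.smul_sum]
    have hterm : ∀ j ∈ Finset.Ico 1 (m+1),
        γ^(m+1-j) • (descProd (fun l => Pmat p (π l)) j (m+1) *ᵥ w j)
        = γ • (Pmat p (π (m+1)) *ᵥ
            (γ^(m-j) • (descProd (fun l => Pmat p (π l)) j m *ᵥ w j))) := by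
      intro j hj
      rw [Finset.mem_Ico] at hj
      have h1 : m + 1 - j = (m - j) + 1 := by omega
      rw [Matrix.mulVec_smul, Matrix.mulVec_mulVec, h1, pow_succ',
        AVIaux.descProd_succ _ (by omega : j ≤ m), mul_smul]
    rw [Finset.sum_congr rfl hterm]
    have h2 : γ^(m+1) • (descProd (fun l => Pmat p (π l)) 0 (m+1) *ᵥ d)
        = γ • (Pmat p (π (m+1)) *ᵥ
            (γ^m • (descProd (fun l => Pmat p (π l)) 0 m *ᵥ d))) := by
      rw [Matrix.mulVec_smul, Matrix.mulVec_mulVec, pow_succ',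
        AVIaux.descProd_succ _ (Nat.zero_le m), mul_smul]
    have h3 : γ^(m+1-(m+1)) • (descProd (fun l => Pmat p (π l)) (m+1) (m+1) *ᵥ w (m+1))
        = w (m+1) := by
      rw [AVIaux.descProd_of_le _ (le_refl (m+1))]
      simp
    rw [h2, h3]
    abel
  have honeL : ∀ m, γ • (Pmat p (π (m+1)) *ᵥ (vstar - v m)) - ε (m+1) ≤ vstar - v (m+1) := by
    intro m
    have hsub := AVIaux.Tpol_sub p r γ (π (m+1)) vstar (v m)
    intro x
    have h1 := AVIaux.Tpol_le_Topt p r γ (π (m+1)) vstar x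
    have h2 := congrFun hsub x
    have h3 := congrFun (hupd m) x
    have h4 := congrFun (hgreedy m) x
    have h5 := congrFun hfix x
    simp only [Pi.sub_apply, Pi.add_apply, Pi.smul_apply, smul_eq_mul] at h1 h2 h3 h4 h5 ⊢
    linarith
  have hdL : ∀ m : ℕ,
      (∑ j ∈ Finset.Ico 1 (m+1), γ^(m-j) • (descProd (fun l => Pmat p (π l)) j m *ᵥ (-ε j)))
        + γ^m • (descProd (fun l => Pmat p (π l)) 0 m *ᵥ (vstar - v 0)) ≤ vstar - v m := by
    intro m
    induction m with
    | zero =>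
        rw [AVIaux.descProd_of_le _ (le_refl 0)]
        simp
    | succ m ih =>
        have mono : γ • (Pmat p (π (m+1)) *ᵥ
            ((∑ j ∈ Finset.Ico 1 (m+1),
                γ^(m-j) • (descProd (fun l => Pmat p (π l)) j m *ᵥ (-ε j)))
              + γ^m • (descProd (fun l => Pmat p (π l)) 0 m *ᵥ (vstar - v 0))))
            ≤ γ • (Pmat p (π (m+1)) *ᵥ (vstar - v m)) :=
          smul_le_smul_of_nonneg_left (AVIaux.mulVec_mono (hPk (m+1)).1 ih) hγ0'
        refine le_trans (le_of_eq ?_) (le_trans (sub_le_sub_right mono _) (honeL m))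
        rw [keyL m (fun j => -ε j) (vstar - v 0)]
        abel
  -- one step analysis of the loss
  have hstep : ∀ k : ℕ, vstar - vpi p r γ (π (k+1)) ≤
      γ • (((1 : Matrix X X ℝ) - γ • Pmat p (π (k+1)))⁻¹ *ᵥ
        ((Pmat p πs) *ᵥ (vstar - v k)))
      - γ • (((1 : Matrix X X ℝ) - γ • Pmat p (π (k+1)))⁻¹ *ᵥ
        ((Pmat p (π (k+1))) *ᵥ (vstar - v k))) := by
    intro k
    have hstoch := hPk (k+1)
    have hvpifix := AVIaux.vpi_fixed p r γ hp0 hp1 hγ0' hγ1 (π (k+1))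
    have hvs : Tpol p r γ πs vstar = vstar := hπs.trans hfix
    have hsub1 := AVIaux.Tpol_sub p r γ πs vstar (v k)
    have hsub2 := AVIaux.Tpol_sub p r γ (π (k+1)) (v k) (vpi p r γ (π (k+1)))
    have h6' : Pmat p (π (k+1)) *ᵥ (v k - vpi p r γ (π (k+1)))
        = Pmat p (π (k+1)) *ᵥ (vstar - vpi p r γ (π (k+1)))
          - Pmat p (π (k+1)) *ᵥ (vstar - v k) := by
      rw [← Matrix.mulVec_sub]
      congr 1
      abel
    have h0 : vstar - vpi p r γ (π (k+1)) ≤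
        γ • (Pmat p (π (k+1)) *ᵥ (vstar - vpi p r γ (π (k+1))))
        + (γ • (Pmat p πs *ᵥ (vstar - v k))
           - γ • (Pmat p (π (k+1)) *ᵥ (vstar - v k))) := by
      intro x
      have h1 := AVIaux.Tpol_le_Topt p r γ πs (v k) x
      have h2 := congrFun hsub1 x
      have h4 := congrFun (hgreedy k) x
      have h5 := congrFun hsub2 x
      have h6 := congrFun h6' x
      have h7 := congrFun hvs x
      have h8 := congrFun hvpifix x
      simp only [Tpol, Pi.sub_apply, Pi.add_apply, Pi.smul_apply, smul_eq_mul]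
        at h1 h2 h4 h5 h6 h7 h8 ⊢
      have h6g : γ * (Pmat p (π (k+1)) *ᵥ (v k - vpi p r γ (π (k+1)))) x
          = γ * (Pmat p (π (k+1)) *ᵥ (vstar - vpi p r γ (π (k+1)))) x
            - γ * (Pmat p (π (k+1)) *ᵥ (vstar - v k)) x := by rw [h6]; ring
      linarith
    have h9 : ((1 : Matrix X X ℝ) - γ • Pmat p (π (k+1))) *ᵥ (vstar - vpi p r γ (π (k+1)))
        ≤ γ • (Pmat p πs *ᵥ (vstar - v k)) - γ • (Pmat p (π (k+1)) *ᵥ (vstar - v k)) := by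
      rw [Matrix.sub_mulVec, Matrix.one_mulVec, Matrix.smul_mulVec]
      intro x
      have h0x := h0 x
      simp only [Pi.sub_apply, Pi.add_apply, Pi.smul_apply, smul_eq_mul] at h0x ⊢
      linarith
    have h10 := AVIaux.mulVec_mono
      (AVIaux.resolvent_inv_nonneg hstoch hγ0' hγ1) h9
    rw [AVIaux.resolvent_cancel hstoch hγ0' hγ1] at h10
    refine le_trans h10 (le_of_eq ?_)
    rw [Matrix.mulVec_sub, Matrix.mulVec_smul, Matrix.mulVec_smul]
  -- combined componentwise bound
  have hcomb : ∀ k : ℕ, vstar - vpi p r γ (π (k+1)) ≤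
      (∑ j ∈ Finset.Ico 1 (k+1), (2*γ^(k+1-j)/(1-γ)) •
        (((1/2 : ℝ) • (Qmat p γ π (k+1) j + Qmat' p γ π πs (k+1) j)) *ᵥ
          (fun x => |ε j x|)))
      + (γ^(k+1) * (2/(1-γ)) * D0) • (fun _ => (1:ℝ)) := by
    intro k
    set Qi : Matrix X X ℝ := ((1 : Matrix X X ℝ) - γ • Pmat p (π (k+1)))⁻¹ with hQidef
    set Dj : ℕ → ℕ → Matrix X X ℝ := descProd (fun l => Pmat p (π l)) with hDjdef
    have hQi0 : ∀ i j, 0 ≤ Qi i j := AVIaux.resolvent_inv_nonneg (hPk (k+1)) hγ0' hγ1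
    have hγp : ∀ n : ℕ, (0:ℝ) ≤ γ ^ n := fun n => pow_nonneg hγ0' n
    -- the two expansions
    have expand : ∀ (B F G : Matrix X X ℝ) (C E : ℕ → Matrix X X ℝ)
        (hC : ∀ j ∈ Finset.Ico 1 (k+1), B * C j = E j) (hF : B * F = G)
        (w : ℕ → X → ℝ) (d : X → ℝ),
        γ • (Qi *ᵥ (B *ᵥ ((∑ j ∈ Finset.Ico 1 (k+1), γ^(k-j) • (C j *ᵥ w j))
            + γ^k • (F *ᵥ d))))
        = (∑ j ∈ Finset.Ico 1 (k+1), γ^(k+1-j) • ((Qi * E j) *ᵥ w j))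
          + γ^(k+1) • ((Qi * G) *ᵥ d) := by
      intro B F G C E hC hF w d
      rw [Matrix.mulVec_add, Matrix.mulVec_add, AVIaux.mulVec_sumF, AVIaux.mulVec_sumF,
        smul_add, Finset.smul_sum]
      congr 1
      · refine Finset.sum_congr rfl fun j hj => ?_
        have hj' : j ≤ k := by rw [Finset.mem_Ico] at hj; omega
        have h1 : k + 1 - j = (k - j) + 1 := by omega
        rw [Matrix.mulVec_smul, Matrix.mulVec_smul, Matrix.mulVec_mulVec,
          Matrix.mulVec_mulVec, Matrix.mul_assoc, hC j hj, h1, pow_succ',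
          mul_smul]
      · rw [Matrix.mulVec_smul, Matrix.mulVec_smul, Matrix.mulVec_mulVec,
          Matrix.mulVec_mulVec, Matrix.mul_assoc, hF, pow_succ',
          mul_smul]
    have hCU : ∀ j ∈ Finset.Ico 1 (k+1), Pmat p πs * (Pmat p πs ^ (k-j)) = Pmat p πs ^ (k+1-j) := by
      intro j hj
      rw [Finset.mem_Ico] at hj
      have h1 : k + 1 - j = (k - j) + 1 := by omega
      rw [h1, pow_succ']
    have hCL : ∀ j ∈ Finset.Ico 1 (k+1), Pmat p (π (k+1)) * Dj j k = Dj j (k+1) := by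
      intro j hj
      rw [Finset.mem_Ico] at hj
      rw [hDjdef]
      exact (AVIaux.descProd_succ (fun l => Pmat p (π l)) (by omega : j ≤ k)).symm
    have hmain : vstar - vpi p r γ (π (k+1)) ≤
        ((∑ j ∈ Finset.Ico 1 (k+1), γ^(k+1-j) • ((Qi * (Pmat p πs ^ (k+1-j))) *ᵥ (-ε j)))
          + γ^(k+1) • ((Qi * (Pmat p πs ^ (k+1))) *ᵥ (vstar - v 0)))
        - ((∑ j ∈ Finset.Ico 1 (k+1), γ^(k+1-j) • ((Qi * Dj j (k+1)) *ᵥ (-ε j)))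
          + γ^(k+1) • ((Qi * Dj 0 (k+1)) *ᵥ (vstar - v 0))) := by
      have hA : Qi *ᵥ (Pmat p πs *ᵥ (vstar - v k)) ≤ Qi *ᵥ (Pmat p πs *ᵥ
          ((∑ j ∈ Finset.Ico 1 (k+1), γ^(k-j) • ((Pmat p πs ^ (k-j)) *ᵥ (-ε j)))
            + γ^k • ((Pmat p πs ^ k) *ᵥ (vstar - v 0)))) :=
        AVIaux.mulVec_mono hQi0 (AVIaux.mulVec_mono hPs.1 (hdU k))
      have hB : Qi *ᵥ (Pmat p (π (k+1)) *ᵥ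
          ((∑ j ∈ Finset.Ico 1 (k+1), γ^(k-j) • (Dj j k *ᵥ (-ε j)))
            + γ^k • (Dj 0 k *ᵥ (vstar - v 0))))
          ≤ Qi *ᵥ (Pmat p (π (k+1)) *ᵥ (vstar - v k)) :=
        AVIaux.mulVec_mono hQi0 (AVIaux.mulVec_mono (hPk (k+1)).1 (hdL k))
      refine le_trans (hstep k) ?_
      rw [← expand (Pmat p πs) (Pmat p πs ^ k) (Pmat p πs ^ (k+1)) _ _ hCU (pow_succ' _ _).symm
        (fun j => -ε j) (vstar - v 0),
        ← expand (Pmat p (π (k+1))) (Dj 0 k) (Dj 0 (k+1)) _ _ hCL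
          (by rw [hDjdef]
              exact (AVIaux.descProd_succ (fun l => Pmat p (π l)) (Nat.zero_le k)).symm)
          (fun j => -ε j) (vstar - v 0)]
      exact sub_le_sub (smul_le_smul_of_nonneg_left hA hγ0')
        (smul_le_smul_of_nonneg_left hB hγ0')
    have hsplit :
        ((∑ j ∈ Finset.Ico 1 (k+1), γ^(k+1-j) • ((Qi * (Pmat p πs ^ (k+1-j))) *ᵥ (-ε j)))
          + γ^(k+1) • ((Qi * (Pmat p πs ^ (k+1))) *ᵥ (vstar - v 0)))
        - ((∑ j ∈ Finset.Ico 1 (k+1), γ^(k+1-j) • ((Qi * Dj j (k+1)) *ᵥ (-ε j)))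
          + γ^(k+1) • ((Qi * Dj 0 (k+1)) *ᵥ (vstar - v 0)))
        = (∑ j ∈ Finset.Ico 1 (k+1),
            (γ^(k+1-j) • ((Qi * (Pmat p πs ^ (k+1-j))) *ᵥ (-ε j))
              - γ^(k+1-j) • ((Qi * Dj j (k+1)) *ᵥ (-ε j))))
          + (γ^(k+1) • ((Qi * (Pmat p πs ^ (k+1))) *ᵥ (vstar - v 0))
             - γ^(k+1) • ((Qi * Dj 0 (k+1)) *ᵥ (vstar - v 0))) := by
      rw [Finset.sum_sub_distrib]
      abel
    rw [hsplit] at hmain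
    refine le_trans hmain (add_le_add ?_ ?_)
    · refine Finset.sum_le_sum fun j hj => ?_
      have habs1 : (-ε j) ≤ (fun x => |ε j x|) := fun x => neg_le_abs (ε j x)
      have habs2 : (fun x => -|ε j x|) ≤ (-ε j) := fun x => neg_le_neg (le_abs_self (ε j x))
      have hA0 : ∀ i i', 0 ≤ (Qi * (Pmat p πs ^ (k+1-j))) i i' :=
        AVIaux.mul_nonneg_entries hQi0 (AVIaux.stoch_pow hPs (k+1-j)).1
      have hB0 : ∀ i i', 0 ≤ (Qi * Dj j (k+1)) i i' :=
        AVIaux.mul_nonneg_entries hQi0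
          (AVIaux.stoch_descProd (fun l => Pmat p (π l)) hPk j (k+1)).1
      have hm1 : (Qi * (Pmat p πs ^ (k+1-j))) *ᵥ (-ε j)
          ≤ (Qi * (Pmat p πs ^ (k+1-j))) *ᵥ (fun x => |ε j x|) :=
        AVIaux.mulVec_mono hA0 habs1
      have hm2 : -((Qi * Dj j (k+1)) *ᵥ (fun x => |ε j x|)) ≤ (Qi * Dj j (k+1)) *ᵥ (-ε j) := by
        have h1 := AVIaux.mulVec_mono hB0 habs2
        have h2 : (Qi * Dj j (k+1)) *ᵥ (fun x => -|ε j x|)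
            = -((Qi * Dj j (k+1)) *ᵥ (fun x => |ε j x|)) := by
          rw [show (fun x => -|ε j x|) = -(fun x => |ε j x|) from rfl, Matrix.mulVec_neg]
        rw [h2] at h1
        exact h1
      calc γ^(k+1-j) • ((Qi * (Pmat p πs ^ (k+1-j))) *ᵥ (-ε j))
            - γ^(k+1-j) • ((Qi * Dj j (k+1)) *ᵥ (-ε j))
          ≤ γ^(k+1-j) • ((Qi * (Pmat p πs ^ (k+1-j))) *ᵥ (fun x => |ε j x|))
            - γ^(k+1-j) • (-((Qi * Dj j (k+1)) *ᵥ (fun x => |ε j x|))) :=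
            sub_le_sub (smul_le_smul_of_nonneg_left hm1 (hγp _))
              (smul_le_smul_of_nonneg_left hm2 (hγp _))
        _ = (2*γ^(k+1-j)/(1-γ)) •
              (((1/2 : ℝ) • (Qmat p γ π (k+1) j + Qmat' p γ π πs (k+1) j)) *ᵥ
                (fun x => |ε j x|)) := by
            rw [Matrix.smul_mulVec, Matrix.add_mulVec]
            have hq : Qmat p γ π (k+1) j *ᵥ (fun x => |ε j x|)
                = (1-γ) • ((Qi * Dj j (k+1)) *ᵥ (fun x => |ε j x|)) := by
              rw [Qmat, Matrix.smul_mulVec]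
            have hq' : Qmat' p γ π πs (k+1) j *ᵥ (fun x => |ε j x|)
                = (1-γ) • ((Qi * (Pmat p πs ^ (k+1-j))) *ᵥ (fun x => |ε j x|)) := by
              rw [Qmat', Matrix.smul_mulVec]
            rw [hq, hq']
            funext x
            simp only [Pi.sub_apply, Pi.add_apply, Pi.smul_apply, Pi.neg_apply, smul_eq_mul]
            field_simp
            ring
    · -- tail bound
      have hd0U : (vstar - v 0) ≤ (fun _ => D0) := by
        intro x
        rw [hD0def, linfNorm]
        exact le_trans (le_abs_self _)
          (Finset.le_sup' (fun y => |(vstar - v 0) y|) (Finset.mem_univ x))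
      have hd0L : (fun _ => -D0) ≤ (vstar - v 0) := by
        intro x
        have h1 : |(vstar - v 0) x| ≤ D0 := by
          rw [hD0def, linfNorm]
          exact Finset.le_sup' (fun y => |(vstar - v 0) y|) (Finset.mem_univ x)
        calc -D0 ≤ -|(vstar - v 0) x| := neg_le_neg h1
          _ ≤ (vstar - v 0) x := neg_abs_le _
      have hconst : ∀ (S : Matrix X X ℝ), IsStochastic S → ∀ c : ℝ,
          (Qi * S) *ᵥ (fun _ => c) = fun _ => c / (1 - γ) := by
        intro S hS c
        rw [← Matrix.mulVec_mulVec, AVIaux.stoch_mulVec_const hS,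
          AVIaux.resolvent_inv_const (hPk (k+1)) hγ0' hγ1]
      have ht1 : (Qi * (Pmat p πs ^ (k+1))) *ᵥ (vstar - v 0) ≤ fun _ => D0 / (1-γ) := by
        refine le_trans (AVIaux.mulVec_mono (AVIaux.mul_nonneg_entries hQi0
          (AVIaux.stoch_pow hPs (k+1)).1) hd0U) (le_of_eq ?_)
        exact hconst _ (AVIaux.stoch_pow hPs (k+1)) D0
      have ht2 : (fun _ => (-D0) / (1-γ)) ≤ (Qi * Dj 0 (k+1)) *ᵥ (vstar - v 0) := by
        refine le_trans (le_of_eq ?_) (AVIaux.mulVec_mono (AVIaux.mul_nonneg_entries hQi0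
          (AVIaux.stoch_descProd (fun l => Pmat p (π l)) hPk 0 (k+1)).1) hd0L)
        exact (hconst _ (AVIaux.stoch_descProd (fun l => Pmat p (π l)) hPk 0 (k+1)) (-D0)).symm
      calc γ^(k+1) • ((Qi * (Pmat p πs ^ (k+1))) *ᵥ (vstar - v 0))
            - γ^(k+1) • ((Qi * Dj 0 (k+1)) *ᵥ (vstar - v 0))
          ≤ γ^(k+1) • (fun _ => D0 / (1-γ)) - γ^(k+1) • (fun _ => (-D0) / (1-γ)) :=
            sub_le_sub (smul_le_smul_of_nonneg_left ht1 (hγp _))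
              (smul_le_smul_of_nonneg_left ht2 (hγp _))
        _ = (γ^(k+1) * (2/(1-γ)) * D0) • (fun _ => (1:ℝ)) := by
            funext x
            simp only [Pi.sub_apply, Pi.smul_apply, smul_eq_mul]
            field_simp
            ring

  -- norm bound
  have hgeo : ∀ m : ℕ, (∑ j ∈ Finset.Ico 1 (m+1), γ^(m+1-j)) * (1-γ) ≤ γ := by
    intro m
    induction m with
    | zero => simpa using hγ0'
    | succ m ih =>
        show (∑ j ∈ Finset.Ico 1 (m+2), γ^(m+2-j)) * (1-γ) ≤ γ
        rw [Finset.sum_Ico_succ_top (by omega : 1 ≤ m+1)]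
        have hterm : ∀ j ∈ Finset.Ico 1 (m+1), γ^(m+2-j) = γ * γ^(m+1-j) := by
          intro j hj
          rw [Finset.mem_Ico] at hj
          have h1 : m+2-j = (m+1-j)+1 := by omega
          rw [h1, pow_succ']
        rw [Finset.sum_congr rfl hterm, ← Finset.mul_sum]
        have h1 : γ^(m+2-(m+1)) = γ := by
          have h2 : m+2-(m+1) = 1 := by omega
          rw [h2, pow_one]
        rw [h1]
        have hSm0 : 0 ≤ ∑ j ∈ Finset.Ico 1 (m+1), γ^(m+1-j) :=
          Finset.sum_nonneg fun j _ => pow_nonneg hγ0' _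
        nlinarith [ih, hγ0', h1γ]
  have hnorm : ∀ k : ℕ, wLpNorm pp μ (vstar - vpi p r γ (π (k+1))) ≤
      2 * γ / (1 - γ) ^ 2 * εb + γ^(k+1) * (2/(1-γ)) * D0 := by
    intro k
    have hl0 : (0 : X → ℝ) ≤ vstar - vpi p r γ (π (k+1)) := by
      intro x
      have h1 := AVIaux.vpi_le_vstar p r γ hp0 hp1 hγ0' hγ1 hfix (π (k+1)) x
      simp only [Pi.sub_apply, Pi.zero_apply]
      linarith
    have ht0 : 0 ≤ γ^(k+1) * (2/(1-γ)) * D0 :=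
      mul_nonneg (mul_nonneg (pow_nonneg hγ0' _) (by positivity)) hD00
    have hg0 : (0 : X → ℝ) ≤ ∑ j ∈ Finset.Ico 1 (k+1), (2*γ^(k+1-j)/(1-γ)) •
        (((1/2 : ℝ) • (Qmat p γ π (k+1) j + Qmat' p γ π πs (k+1) j)) *ᵥ
          (fun x => |ε j x|)) := by
      intro x
      rw [Finset.sum_apply]
      refine Finset.sum_nonneg fun j hj => ?_
      simp only [Pi.smul_apply, smul_eq_mul]
      refine mul_nonneg (by positivity) ?_
      exact AVIaux.mulVec_nonneg (hSst (k+1) j).1 (fun y => abs_nonneg _) x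
    have htone0 : (0 : X → ℝ) ≤ (γ^(k+1) * (2/(1-γ)) * D0) • (fun _ => (1:ℝ)) := by
      intro x
      simp only [Pi.smul_apply, smul_eq_mul, Pi.zero_apply, mul_one]
      exact ht0
    -- step 1: compare with the bound vector
    have hstep1 : wLpNorm pp μ (vstar - vpi p r γ (π (k+1))) ≤
        wLpNorm pp μ ((∑ j ∈ Finset.Ico 1 (k+1), (2*γ^(k+1-j)/(1-γ)) •
          (((1/2 : ℝ) • (Qmat p γ π (k+1) j + Qmat' p γ π πs (k+1) j)) *ᵥ
            (fun x => |ε j x|)))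
          + (γ^(k+1) * (2/(1-γ)) * D0) • (fun _ => (1:ℝ))) := by
      refine AVIaux.wLpNorm_mono hpp hμ.1 fun x => ?_
      have hcx := hcomb k x
      simp only [Pi.add_apply] at hcx ⊢
      rw [abs_of_nonneg (hl0 x), abs_of_nonneg (add_nonneg (hg0 x) (htone0 x))]
      exact hcx
    -- step 2: Minkowski
    have hstep2 := AVIaux.wLpNorm_add_le (pp := pp) (μ := μ) hpp hμ.1 hg0 htone0
    -- step 3: norm of constant
    have hstep3 : wLpNorm pp μ ((γ^(k+1) * (2/(1-γ)) * D0) • (fun _ => (1:ℝ)))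
        = γ^(k+1) * (2/(1-γ)) * D0 := by
      have h1 : ((γ^(k+1) * (2/(1-γ)) * D0) • (fun _ => (1:ℝ)) : X → ℝ)
          = fun _ => γ^(k+1) * (2/(1-γ)) * D0 := by
        funext x
        simp
      rw [h1]
      exact AVIaux.wLpNorm_const hpp hμ ht0
    -- step 4: Jensen bound on the main sum
    have hstep4 : wLpNorm pp μ (∑ j ∈ Finset.Ico 1 (k+1), (2*γ^(k+1-j)/(1-γ)) •
        (((1/2 : ℝ) • (Qmat p γ π (k+1) j + Qmat' p γ π πs (k+1) j)) *ᵥ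
          (fun x => |ε j x|))) ≤ 2 * γ / (1 - γ) ^ 2 * εb := by
      rcases Nat.eq_zero_or_pos k with hk0 | hkpos
      · subst hk0
        rw [show Finset.Ico 1 (0+1) = ∅ from Finset.Ico_self 1, Finset.sum_empty,
          AVIaux.wLpNorm_zero hpp μ]
        have : (0:ℝ) ≤ 2 * γ / (1 - γ) ^ 2 := by positivity
        exact mul_nonneg this hεb0
      · have hjen := AVIaux.jensen_wLp (pp := pp) hpp hμ
          (s := Finset.Ico 1 (k+1)) (Finset.nonempty_Ico.mpr (by omega))
          (fun j => 2*γ^(k+1-j)/(1-γ)) (fun j _ => by positivity)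
          (fun j => (1/2 : ℝ) • (Qmat p γ π (k+1) j + Qmat' p γ π πs (k+1) j))
          (fun j _ => hSst (k+1) j) ε hεb0
          (fun j hj => by
            rw [Finset.mem_Ico] at hj
            exact AVIaux.sum_le_of_wLpNorm_le hpp (hmix0 (k+1) j) hεb0
              (hεb j (k+1) (by omega)))
        refine le_trans hjen ?_
        have hCle : (∑ j ∈ Finset.Ico 1 (k+1), 2*γ^(k+1-j)/(1-γ))
            ≤ 2 * γ / (1 - γ) ^ 2 := by
          have h1 : (∑ j ∈ Finset.Ico 1 (k+1), 2*γ^(k+1-j)/(1-γ))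
              = (2/(1-γ)) * ∑ j ∈ Finset.Ico 1 (k+1), γ^(k+1-j) := by
            rw [Finset.mul_sum]
            exact Finset.sum_congr rfl fun j _ => by ring
          have h2 : (∑ j ∈ Finset.Ico 1 (k+1), γ^(k+1-j)) ≤ γ / (1-γ) :=
            (le_div_iff₀ h1γ).mpr (hgeo k)
          rw [h1]
          calc (2/(1-γ)) * ∑ j ∈ Finset.Ico 1 (k+1), γ^(k+1-j)
              ≤ (2/(1-γ)) * (γ / (1-γ)) :=
                mul_le_mul_of_nonneg_left h2 (by positivity)
            _ = 2 * γ / (1 - γ) ^ 2 := by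
                field_simp
        exact mul_le_mul_of_nonneg_right hCle hεb0
    calc wLpNorm pp μ (vstar - vpi p r γ (π (k+1))) ≤ _ := hstep1
      _ ≤ _ := hstep2
      _ ≤ 2 * γ / (1 - γ) ^ 2 * εb + γ^(k+1) * (2/(1-γ)) * D0 := by
          rw [hstep3]
          exact add_le_add hstep4 le_rfl
  -- conclude via limsup
  have htend : Filter.Tendsto
      (fun k : ℕ => 2 * γ / (1 - γ) ^ 2 * εb + γ^k * (2/(1-γ)) * D0)
      Filter.atTop (nhds (2 * γ / (1 - γ) ^ 2 * εb)) := by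
    have h1 : Filter.Tendsto (fun k : ℕ => γ^k) Filter.atTop (nhds 0) :=
      tendsto_pow_atTop_nhds_zero_of_lt_one hγ0' hγ1
    have h2 := (h1.mul_const ((2/(1-γ)) * D0)).const_add (2 * γ / (1 - γ) ^ 2 * εb)
    simpa [mul_assoc] using h2
  have hbound : ∀ᶠ k in Filter.atTop,
      wLpNorm pp μ (vstar - vpi p r γ (π k)) ≤
        2 * γ / (1 - γ) ^ 2 * εb + γ^k * (2/(1-γ)) * D0 := by
    filter_upwards [Filter.eventually_ge_atTop 1] with k hk
    obtain ⟨k', rfl⟩ := Nat.exists_eq_add_of_le hk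
    simpa [add_comm] using hnorm k'
  have hcob : Filter.IsCoboundedUnder (· ≤ ·) Filter.atTop
      (fun k => wLpNorm pp μ (vstar - vpi p r γ (π k))) :=
    Filter.isCoboundedUnder_le_of_le Filter.atTop
      (fun k => AVIaux.wLpNorm_nonneg hμ.1 _)
  have hbdd : Filter.IsBoundedUnder (· ≤ ·) Filter.atTop
      (fun k : ℕ => 2 * γ / (1 - γ) ^ 2 * εb + γ^k * (2/(1-γ)) * D0) :=
    htend.isBoundedUnder_le
  calc Filter.atTop.limsup (fun k => wLpNorm pp μ (vstar - vpi p r γ (π k)))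
      ≤ Filter.atTop.limsup
          (fun k : ℕ => 2 * γ / (1 - γ) ^ 2 * εb + γ^k * (2/(1-γ)) * D0) :=
        Filter.limsup_le_limsup hbound hcob hbdd
    _ = 2 * γ / (1 - γ) ^ 2 * εb := htend.limsup_eq

end AVI
end

section
/- Performance of Approximate Value Iteration in case of convergence: run Approximate Value Iteration v_{k+1} = T v_k + ε_{k+1} and suppose the sequence v_k converges to some v; let π be a policy greedy with respect to v. Let ν be a distribution with ν(j) > 0 for all j, C(ν) = max_{i,j,a} p(i,a,j)/ν(j), and p ≥ 1. Then ‖v_* − v^π‖_∞ ≤ (2γ·C(ν)^{1/p}/(1−γ))·‖v − T v‖_{p,ν}. -/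
open Matrix Filter Finset

section Aux

variable {X : Type*} [Fintype X] [Nonempty X]

/-- A probability-weighted average is bounded by a bound on the entries. -/
lemma row_nonexp (q c : X → ℝ) (S : ℝ) (hq0 : ∀ j, 0 ≤ q j)
    (hq1 : ∑ j, q j = 1) (hc : ∀ j, |c j| ≤ S) : |∑ j, q j * c j| ≤ S := by
  calc |∑ j, q j * c j| ≤ ∑ j, |q j * c j| := Finset.abs_sum_le_sum_abs _ _
    _ ≤ ∑ j, q j * S := Finset.sum_le_sum (fun j _ => by
        rw [abs_mul, abs_of_nonneg (hq0 j)]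
        exact mul_le_mul_of_nonneg_left (hc j) (hq0 j))
    _ = S := by rw [← Finset.sum_mul, hq1, one_mul]

/-- Refined bound via the concentration coefficient and weighted Hölder. -/
lemma row_bound (pp C : ℝ) (hpp : 1 ≤ pp) (ν q c : X → ℝ)
    (hq0 : ∀ j, 0 ≤ q j) (hq1 : ∑ j, q j = 1) (hC : 0 ≤ C)
    (hqC : ∀ j, q j ≤ C * ν j) (hν : ∀ j, 0 ≤ ν j) :
    |∑ j, q j * c j| ≤ C ^ (1/pp) * (∑ x, ν x * |c x| ^ pp) ^ (1/pp) := by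
  have hpp0 : 0 < pp := lt_of_lt_of_le one_pos hpp
  have h1 : |∑ j, q j * c j| ≤ ∑ j, q j * |c j| := by
    calc |∑ j, q j * c j| ≤ ∑ j, |q j * c j| := Finset.abs_sum_le_sum_abs _ _
      _ = ∑ j, q j * |c j| := Finset.sum_congr rfl (fun j _ => by
          rw [abs_mul, abs_of_nonneg (hq0 j)])
  have h2 := Real.inner_le_weight_mul_Lp_of_nonneg Finset.univ hpp q (fun j => |c j|)
    hq0 (fun j => abs_nonneg _)
  rw [hq1, Real.one_rpow, one_mul] at h2
  have h3 : (∑ j, q j * |c j| ^ pp) ≤ C * ∑ x, ν x * |c x| ^ pp := by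
    rw [Finset.mul_sum]
    refine Finset.sum_le_sum (fun j _ => ?_)
    rw [← mul_assoc]
    exact mul_le_mul_of_nonneg_right (hqC j) (Real.rpow_nonneg (abs_nonneg _) _)
  have hsum0 : 0 ≤ ∑ j, q j * |c j| ^ pp :=
    Finset.sum_nonneg (fun j _ => mul_nonneg (hq0 j) (Real.rpow_nonneg (abs_nonneg _) _))
  have hsum0' : 0 ≤ ∑ x, ν x * |c x| ^ pp :=
    Finset.sum_nonneg (fun j _ => mul_nonneg (hν j) (Real.rpow_nonneg (abs_nonneg _) _))
  have h4 : (∑ j, q j * |c j| ^ pp) ^ pp⁻¹ ≤ (C * ∑ x, ν x * |c x| ^ pp) ^ pp⁻¹ :=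
    Real.rpow_le_rpow hsum0 h3 (by positivity)
  have h5 : (C * ∑ x, ν x * |c x| ^ pp) ^ pp⁻¹
      = C ^ (1/pp) * (∑ x, ν x * |c x| ^ pp) ^ (1/pp) := by
    rw [Real.mul_rpow hC hsum0', one_div]
  calc |∑ j, q j * c j| ≤ ∑ j, q j * |c j| := h1
    _ ≤ (∑ j, q j * |c j| ^ pp) ^ pp⁻¹ := h2
    _ ≤ (C * ∑ x, ν x * |c x| ^ pp) ^ pp⁻¹ := h4
    _ = _ := h5

lemma abs_sup'_sub_sup'_le {ι : Type*} (s : Finset ι) (hs : s.Nonempty) (f g : ι → ℝ) :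
    |s.sup' hs f - s.sup' hs g| ≤ s.sup' hs (fun a => |f a - g a|) := by
  rw [abs_sub_le_iff]
  constructor
  · rw [sub_le_iff_le_add]
    apply Finset.sup'_le
    intro a ha
    have h2 : |f a - g a| ≤ s.sup' hs (fun a => |f a - g a|) :=
      Finset.le_sup' (fun a => |f a - g a|) ha
    have h3 : g a ≤ s.sup' hs g := Finset.le_sup' g ha
    have h1 : f a - g a ≤ |f a - g a| := le_abs_self _
    linarith
  · rw [sub_le_iff_le_add]
    apply Finset.sup'_le
    intro a ha
    have h2 : |f a - g a| ≤ s.sup' hs (fun a => |f a - g a|) :=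
      Finset.le_sup' (fun a => |f a - g a|) ha
    have h3 : f a ≤ s.sup' hs f := Finset.le_sup' f ha
    have h1 : g a - f a ≤ |f a - g a| := by
      rw [abs_sub_comm]; exact le_abs_self _
    linarith

end Aux

/-- Performance of Approximate Value Iteration in case of convergence. -/
theorem approx_VI_value_converges
    {X A : Type*} [Fintype X] [Nonempty X] [DecidableEq X] [Fintype A] [Nonempty A]
    (p : X → A → X → ℝ) (r : X → A → X → ℝ) (γ : ℝ)
    (hp0 : ∀ i a j, 0 ≤ p i a j) (hp1 : ∀ i a, ∑ j, p i a j = 1)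
    (hγ0 : 0 < γ) (hγ1 : γ < 1)
    (vstar : X → ℝ) (hfix : Topt p r γ vstar = vstar)
    -- approximate value iteration with errors ε
    (v : ℕ → X → ℝ) (ε : ℕ → X → ℝ)
    (hupd : ∀ k, v (k + 1) = Topt p r γ (v k) + ε (k + 1))
    -- the values converge to `vlim`, and `πg` is greedy with respect to `vlim`
    (vlim : X → ℝ) (hconv : Filter.Tendsto v Filter.atTop (nhds vlim))
    (πg : X → A) (hπg : Greedy p r γ πg vlim)
    (ν : X → ℝ) (hν : IsDistribution ν) (hνpos : ∀ j, 0 < ν j)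
    (pp : ℝ) (hpp : 1 ≤ pp) :
    linfNorm (vstar - vpi p r γ πg) ≤
      2 * γ * concCoef p ν ^ (1 / pp) / (1 - γ) *
        wLpNorm pp ν (vlim - Topt p r γ vlim) := by
  have hγne : (0:ℝ) < 1 - γ := by linarith
  -- notation
  set Cν := concCoef p ν with hCdef
  set W := wLpNorm pp ν (vlim - Topt p r γ vlim) with hWdef
  set K := Cν ^ (1 / pp) * W with hKdef
  have hC0 : 0 ≤ Cν := by
    obtain ⟨i⟩ := (inferInstance : Nonempty X)
    obtain ⟨a⟩ := (inferInstance : Nonempty A)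
    have h : p i a i / ν i ≤ Cν := by
      rw [hCdef, concCoef]
      exact Finset.le_sup' (fun x : X × A × X => p x.1 x.2.1 x.2.2 / ν x.2.2)
        (Finset.mem_univ (i, a, i))
    exact le_trans (div_nonneg (hp0 i a i) (hνpos i).le) h
  have hrowC : ∀ i a j, p i a j ≤ Cν * ν j := by
    intro i a j
    have h : p i a j / ν j ≤ Cν := by
      rw [hCdef, concCoef]
      exact Finset.le_sup' (fun x : X × A × X => p x.1 x.2.1 x.2.2 / ν x.2.2)
        (Finset.mem_univ (i, a, j))
    exact (div_le_iff₀ (hνpos j)).mp h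
  -- bound of rows against the Bellman residual
  have hKb : ∀ (i : X) (a : A),
      |∑ j, p i a j * (vlim j - Topt p r γ vlim j)| ≤ K := by
    intro i a
    have h := row_bound pp Cν hpp ν (p i a)
      (fun j => vlim j - Topt p r γ vlim j) (hp0 i a) (hp1 i a) hC0
      (hrowC i a) (fun j => (hνpos j).le)
    have hWeq : W = (∑ x, ν x * |vlim x - Topt p r γ vlim x| ^ pp) ^ (1 / pp) := by
      rw [hWdef, wLpNorm]; simp [Pi.sub_apply]
    rw [hKdef, hWeq]
    exact h
  have hK0 : 0 ≤ K := le_trans (abs_nonneg _) (hKb (Classical.arbitrary X) (Classical.arbitrary A))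
  -- the matrix 1 - γ P is invertible
  have hzero : ∀ z : X → ℝ,
      ((1 : Matrix X X ℝ) - γ • Pmat p πg).mulVec z = 0 → z = 0 := by
    intro z hz
    have hzi : ∀ i, z i = γ * ∑ j, p i (πg i) j * z j := by
      intro i
      have h := congrFun hz i
      simp only [Matrix.sub_mulVec, Matrix.smul_mulVec, Matrix.one_mulVec,
        Pi.sub_apply, Pi.smul_apply, smul_eq_mul, Pi.zero_apply] at h
      simp only [Matrix.mulVec, dotProduct, Pmat, Matrix.of_apply] at h
      linarith
    set S := Finset.univ.sup' Finset.univ_nonempty (fun i => |z i|) with hSdef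
    have hle : ∀ i, |z i| ≤ S := fun i => Finset.le_sup' (fun i => |z i|) (Finset.mem_univ i)
    have hSle : S ≤ γ * S := by
      apply Finset.sup'_le
      intro i _
      rw [hzi i, abs_mul, abs_of_nonneg hγ0.le]
      exact mul_le_mul_of_nonneg_left
        (row_nonexp _ _ _ (hp0 i (πg i)) (hp1 i (πg i)) hle) hγ0.le
    have hS0 : 0 ≤ S := le_trans (abs_nonneg (z (Classical.arbitrary X))) (hle _)
    funext i
    have h1 : |z i| ≤ 0 := le_trans (hle i) (by nlinarith)
    have h2 : |z i| = 0 := le_antisymm h1 (abs_nonneg _)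
    simpa [abs_eq_zero] using h2
  have hunit : IsUnit ((1 : Matrix X X ℝ) - γ • Pmat p πg) := by
    rw [← Matrix.mulVec_injective_iff_isUnit]
    intro u w huw
    have h0 : ((1 : Matrix X X ℝ) - γ • Pmat p πg).mulVec (u - w) = 0 := by
      rw [Matrix.mulVec_sub, huw, sub_self]
    exact sub_eq_zero.mp (hzero _ h0)
  -- the fixed-point property of v^π
  have hfixp : ∀ i, vpi p r γ πg i
      = rvec p r πg i + γ * ∑ j, p i (πg i) j * vpi p r γ πg j := by
    have h1 : ((1 : Matrix X X ℝ) - γ • Pmat p πg).mulVec (vpi p r γ πg)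
        = rvec p r πg := by
      simp only [vpi]
      rw [Matrix.mulVec_mulVec,
        Matrix.mul_nonsing_inv _ ((Matrix.isUnit_iff_isUnit_det _).mp hunit),
        Matrix.one_mulVec]
    intro i
    have h := congrFun h1 i
    simp only [Matrix.sub_mulVec, Matrix.smul_mulVec, Matrix.one_mulVec,
      Pi.sub_apply, Pi.smul_apply, smul_eq_mul] at h
    simp only [Matrix.mulVec, dotProduct, Pmat, Matrix.of_apply] at h
    linarith
  -- the greedy property pointwise
  have hgreedy : ∀ i, Topt p r γ vlim i
      = rvec p r πg i + γ * ∑ j, p i (πg i) j * vlim j := by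
    intro i
    have h := congrFun hπg i
    simp only [Tpol, Pi.add_apply, Pi.smul_apply, smul_eq_mul, Matrix.mulVec,
      dotProduct, Pmat, Matrix.of_apply] at h
    linarith
  -- Lipschitz property of the optimal Bellman operator, rowwise
  have hdiff : ∀ (u w : X → ℝ) (i : X), |Topt p r γ u i - Topt p r γ w i|
      ≤ Finset.univ.sup' Finset.univ_nonempty
          (fun a => γ * |∑ j, p i a j * (u j - w j)|) := by
    intro u w i
    have h := abs_sup'_sub_sup'_le Finset.univ Finset.univ_nonempty
      (fun a => ∑ j, p i a j * (r i a j + γ * u j))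
      (fun a => ∑ j, p i a j * (r i a j + γ * w j))
    refine le_trans h (Finset.sup'_le _ _ ?_)
    intro a _
    have heq : |(∑ j, p i a j * (r i a j + γ * u j))
        - (∑ j, p i a j * (r i a j + γ * w j))|
        = γ * |∑ j, p i a j * (u j - w j)| := by
      have hsum : (∑ j, p i a j * (r i a j + γ * u j))
          - (∑ j, p i a j * (r i a j + γ * w j))
          = γ * ∑ j, p i a j * (u j - w j) := by
        rw [← Finset.sum_sub_distrib, Finset.mul_sum]
        exact Finset.sum_congr rfl (fun j _ => by ring)
      rw [hsum, abs_mul, abs_of_nonneg hγ0.le]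
    exact heq.le.trans (Finset.le_sup'
      (fun a => γ * |∑ j, p i a j * (u j - w j)|) (Finset.mem_univ a))
  -- bound on s' = sup over rows of |row · (vstar - vlim)|
  set s' := Finset.univ.sup' Finset.univ_nonempty
    (fun ia : X × A => |∑ j, p ia.1 ia.2 j * (vstar j - vlim j)|) with hs'def
  have hΔ : ∀ j, |Topt p r γ vstar j - Topt p r γ vlim j| ≤ γ * s' := by
    intro j
    refine (hdiff vstar vlim j).trans (Finset.sup'_le _ _ ?_)
    intro a _
    have h1 : |∑ l, p j a l * (vstar l - vlim l)| ≤ s' := by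
      rw [hs'def]
      exact Finset.le_sup'
        (fun ia : X × A => |∑ l, p ia.1 ia.2 l * (vstar l - vlim l)|)
        (Finset.mem_univ (j, a))
    exact mul_le_mul_of_nonneg_left h1 hγ0.le
  have hs' : s' ≤ K / (1 - γ) := by
    have h : s' ≤ γ * s' + K := by
      apply Finset.sup'_le
      rintro ⟨i, a⟩ -
      have hyd : ∀ j, vstar j - vlim j
          = (Topt p r γ vstar j - Topt p r γ vlim j)
            - (vlim j - Topt p r γ vlim j) := by
        intro j
        have h3 := congrFun hfix j
        linarith
      have hsplit : (∑ j, p i a j * (vstar j - vlim j))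
          = (∑ j, p i a j * (Topt p r γ vstar j - Topt p r γ vlim j))
            - (∑ j, p i a j * (vlim j - Topt p r γ vlim j)) := by
        rw [← Finset.sum_sub_distrib]
        exact Finset.sum_congr rfl (fun j _ => by rw [hyd j]; ring)
      rw [hsplit]
      have h1 : |∑ j, p i a j * (Topt p r γ vstar j - Topt p r γ vlim j)|
          ≤ γ * s' := row_nonexp _ _ _ (hp0 i a) (hp1 i a) hΔ
      have h2 := hKb i a
      have h3 := abs_sub (∑ j, p i a j * (Topt p r γ vstar j - Topt p r γ vlim j))
        (∑ j, p i a j * (vlim j - Topt p r γ vlim j))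
      linarith
    rw [le_div_iff₀ hγne]
    nlinarith
  -- bound on s = sup over states of |P^π row · (vlim - v^π)|
  set s := Finset.univ.sup' Finset.univ_nonempty
    (fun i : X => |∑ l, p i (πg i) l * (vlim l - vpi p r γ πg l)|) with hsdef
  have hx : ∀ j, vlim j - vpi p r γ πg j
      = (vlim j - Topt p r γ vlim j)
        + γ * ∑ l, p j (πg j) l * (vlim l - vpi p r γ πg l) := by
    intro j
    have h1 := hfixp j
    have h2 := hgreedy j
    have h3 : ∑ l, p j (πg j) l * (vlim l - vpi p r γ πg l)
        = (∑ l, p j (πg j) l * vlim l) - ∑ l, p j (πg j) l * vpi p r γ πg l := by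
      rw [← Finset.sum_sub_distrib]
      exact Finset.sum_congr rfl (fun l _ => by ring)
    rw [h3]; linarith
  have hs : s ≤ K / (1 - γ) := by
    have h : s ≤ γ * s + K := by
      apply Finset.sup'_le
      intro i _
      have hsplit : ∑ l, p i (πg i) l * (vlim l - vpi p r γ πg l)
          = (∑ l, p i (πg i) l * (vlim l - Topt p r γ vlim l))
            + γ * ∑ l, p i (πg i) l *
                (∑ m, p l (πg l) m * (vlim m - vpi p r γ πg m)) := by
        rw [Finset.mul_sum, ← Finset.sum_add_distrib]
        exact Finset.sum_congr rfl (fun l _ => by rw [hx l]; ring)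
      rw [hsplit]
      have h1 := hKb i (πg i)
      have h2 : |∑ l, p i (πg i) l *
          (∑ m, p l (πg l) m * (vlim m - vpi p r γ πg m))| ≤ s := by
        refine row_nonexp _ _ _ (hp0 i (πg i)) (hp1 i (πg i)) (fun l => ?_)
        rw [hsdef]
        exact Finset.le_sup'
          (fun i : X => |∑ m, p i (πg i) m * (vlim m - vpi p r γ πg m)|)
          (Finset.mem_univ l)
      have h3 := abs_add_le (∑ l, p i (πg i) l * (vlim l - Topt p r γ vlim l))
        (γ * ∑ l, p i (πg i) l * (∑ m, p l (πg l) m * (vlim m - vpi p r γ πg m)))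
      rw [abs_mul, abs_of_nonneg hγ0.le] at h3
      nlinarith
    rw [le_div_iff₀ hγne]
    nlinarith
  -- conclusion
  have hfinal : ∀ i, |vstar i - vpi p r γ πg i| ≤ γ * s' + γ * s := by
    intro i
    have h1 := hfixp i
    have h2 := hgreedy i
    have h3 := congrFun hfix i
    have h4 : ∑ l, p i (πg i) l * (vlim l - vpi p r γ πg l)
        = (∑ l, p i (πg i) l * vlim l) - ∑ l, p i (πg i) l * vpi p r γ πg l := by
      rw [← Finset.sum_sub_distrib]
      exact Finset.sum_congr rfl (fun l _ => by ring)
    have hdeq : vstar i - vpi p r γ πg i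
        = (Topt p r γ vstar i - Topt p r γ vlim i)
          + γ * ∑ l, p i (πg i) l * (vlim l - vpi p r γ πg l) := by
      rw [h4]; ring_nf; linarith
    rw [hdeq]
    have h5 := hΔ i
    have h6 : |∑ l, p i (πg i) l * (vlim l - vpi p r γ πg l)| ≤ s := by
      rw [hsdef]
      exact Finset.le_sup'
        (fun i : X => |∑ l, p i (πg i) l * (vlim l - vpi p r γ πg l)|)
        (Finset.mem_univ i)
    have h7 := abs_add_le (Topt p r γ vstar i - Topt p r γ vlim i)
      (γ * ∑ l, p i (πg i) l * (vlim l - vpi p r γ πg l))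
    rw [abs_mul, abs_of_nonneg hγ0.le] at h7
    nlinarith
  have hRHS : 2 * γ * Cν ^ (1 / pp) / (1 - γ) * W
      = γ * (K / (1 - γ)) + γ * (K / (1 - γ)) := by
    rw [hKdef]; field_simp; ring
  rw [linfNorm, hRHS]
  apply Finset.sup'_le
  intro i _
  have h := hfinal i
  have h1 : γ * s' ≤ γ * (K / (1 - γ)) := mul_le_mul_of_nonneg_left hs' hγ0.le
  have h2 : γ * s ≤ γ * (K / (1 - γ)) := mul_le_mul_of_nonneg_left hs hγ0.le
  simp only [Pi.sub_apply]
  linarith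
end
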